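/- arXiv:1906.09224 — 8 statements merged into one kernel-verified Lean document; each statement's English description precedes it below -/
import Mathlib

section
/- Every finite partial order P of width 2 has order dimension at most 2. -/
section aux

variable {α : Type*} [PartialOrder α]

private lemma no3 (hw : ∀ s : Finset α, IsAntichain (· ≤ ·) (s : Set α) → s.card ≤ 2)
    {x a b : α} (h1 : ¬x ≤ a) (h2 : ¬a ≤ x) (h3 : ¬x ≤ b) (h4 : ¬b ≤ x)
    (h5 : ¬a ≤ b) (h6 : ¬b ≤ a) : False := by
  classical
  have hxa : x ≠ a := by rintro rfl; exact h1 le_rfl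
  have hxb : x ≠ b := by rintro rfl; exact h3 le_rfl
  have hab : a ≠ b := by rintro rfl; exact h5 le_rfl
  have hanti : IsAntichain (· ≤ ·) (({x, a, b} : Finset α) : Set α) := by
    intro u hu v hv huv
    simp only [Finset.coe_insert, Finset.coe_singleton, Set.mem_insert_iff,
      Set.mem_singleton_iff] at hu hv
    rcases hu with rfl | rfl | rfl <;> rcases hv with rfl | rfl | rfl <;>
      first
        | exact absurd rfl huv
        | assumption
  have hle := hw {x, a, b} hanti
  have hcard : ({x, a, b} : Finset α).card = 3 := by
    rw [Finset.card_insert_of_notMem (by simp [hxa, hxb]),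
      Finset.card_insert_of_notMem (by simp [hab]), Finset.card_singleton]
  omega

private lemma exists_coloring (hw : ∀ s : Finset α, IsAntichain (· ≤ ·) (s : Set α) → s.card ≤ 2)
    (s : Finset α) :
    ∃ f : α → Bool, ∀ x ∈ s, ∀ y ∈ s, ¬x ≤ y → ¬y ≤ x → f x ≠ f y := by
  classical
  induction s using Finset.strongInduction with
  | _ s ih =>
  by_cases hca : ∃ a ∈ s, ∃ b ∈ s, (¬a ≤ b ∧ ¬b ≤ a) ∧
      (∃ u ∈ s, ¬u ≤ a ∧ ¬u ≤ b) ∧ ∃ v ∈ s, ¬a ≤ v ∧ ¬b ≤ v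
  · obtain ⟨a, ha, b, hb, ⟨hab, hba⟩, ⟨u, hu, hua, hub⟩, ⟨v, hv, hav, hbv⟩⟩ := hca
    set D := s.filter (fun z => z ≤ a ∨ z ≤ b) with hDdef
    set U := s.filter (fun z => a ≤ z ∨ b ≤ z) with hUdef
    have hDs : D ⊂ s := by
      refine Finset.ssubset_iff_of_subset (Finset.filter_subset _ _) |>.2 ⟨u, hu, ?_⟩
      simp [hDdef, hua, hub]
    have hUs : U ⊂ s := by
      refine Finset.ssubset_iff_of_subset (Finset.filter_subset _ _) |>.2 ⟨v, hv, ?_⟩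
      simp [hUdef, hav, hbv]
    obtain ⟨f1, hf1⟩ := ih D hDs
    obtain ⟨f2, hf2⟩ := ih U hUs
    set g1 : α → Bool := fun z => xor (f1 z) (f1 a) with hg1def
    set g2 : α → Bool := fun z => xor (f2 z) (f2 a) with hg2def
    have haD : a ∈ D := by simp [hDdef, ha]
    have hbD : b ∈ D := by simp [hDdef, hb]
    have haU : a ∈ U := by simp [hUdef, ha]
    have hbU : b ∈ U := by simp [hUdef, hb]
    have hg1 : ∀ x ∈ D, ∀ y ∈ D, ¬x ≤ y → ¬y ≤ x → g1 x ≠ g1 y := by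
      intro x hx y hy h1 h2
      have := hf1 x hx y hy h1 h2
      simp only [hg1def]
      revert this
      cases f1 x <;> cases f1 y <;> cases f1 a <;> decide
    have hg2 : ∀ x ∈ U, ∀ y ∈ U, ¬x ≤ y → ¬y ≤ x → g2 x ≠ g2 y := by
      intro x hx y hy h1 h2
      have := hf2 x hx y hy h1 h2
      simp only [hg2def]
      revert this
      cases f2 x <;> cases f2 y <;> cases f2 a <;> decide
    have hg1a : g1 a = false := by simp [hg1def]
    have hg2a : g2 a = false := by simp [hg2def]
    have hg1b : g1 b = true := by
      have := hg1 b hbD a haD hba hab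
      rw [hg1a] at this
      simpa using this
    have hg2b : g2 b = true := by
      have := hg2 b hbU a haU hba hab
      rw [hg2a] at this
      simpa using this
    have hcover : ∀ z ∈ s, ¬(z ≤ a ∨ z ≤ b) → a ≤ z ∨ b ≤ z := by
      intro z hz hnz
      push_neg at hnz
      by_contra hc
      push_neg at hc
      exact no3 hw hnz.1 hc.1 hnz.2 hc.2 hab hba
    have mixed : ∀ x ∈ s, ∀ y ∈ s, ¬x ≤ y → ¬y ≤ x →
        (x ≤ a ∨ x ≤ b) → ¬(y ≤ a ∨ y ≤ b) → g1 x ≠ g2 y := by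
      intro x hx y hy hxy hyx hxd hyd
      have hyu := hcover y hy hyd
      push_neg at hyd
      by_cases hxa' : x ≤ a
      · have hay : ¬a ≤ y := fun h => hxy (hxa'.trans h)
        have hby : b ≤ y := hyu.resolve_left hay
        have hxb' : ¬x ≤ b := fun h => hxy (h.trans hby)
        have hbx : ¬b ≤ x := fun h => hba (h.trans hxa')
        have h1 : g1 x = false := by
          have := hg1 x (by simp [hDdef, hx, hxa']) b hbD hxb' hbx
          rw [hg1b] at this
          simpa using this
        have h2 : g2 y = true := by
          have hyU : y ∈ U := by simp [hUdef, hy, hyu]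
          have := hg2 y hyU a haU hyd.1 hay
          rw [hg2a] at this
          simpa using this
        rw [h1, h2]; simp
      · have hxb' : x ≤ b := hxd.resolve_left hxa'
        have hby : ¬b ≤ y := fun h => hxy (hxb'.trans h)
        have hay : a ≤ y := hyu.resolve_right hby
        have hax : ¬a ≤ x := fun h => hab (h.trans hxb')
        have h1 : g1 x = true := by
          have := hg1 x (by simp [hDdef, hx, hxb']) a haD hxa' hax
          rw [hg1a] at this
          simpa using this
        have h2 : g2 y = false := by
          have hyU : y ∈ U := by simp [hUdef, hy, hyu]
          have := hg2 y hyU b hbU hyd.2 hby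
          rw [hg2b] at this
          simpa using this
        rw [h1, h2]; simp
    refine ⟨fun z => if z ≤ a ∨ z ≤ b then g1 z else g2 z, ?_⟩
    intro x hx y hy hxy hyx
    by_cases px : x ≤ a ∨ x ≤ b <;> by_cases py : y ≤ a ∨ y ≤ b
    · simp only [px, py, if_true]
      exact hg1 x (by simp [hDdef, hx, px]) y (by simp [hDdef, hy, py]) hxy hyx
    · simp only [px, py, if_true, if_false]
      exact mixed x hx y hy hxy hyx px py
    · simp only [px, py, if_true, if_false]
      exact (mixed y hy x hx hyx hxy py px).symm
    · simp only [px, py, if_false]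
      exact hg2 x (by simp [hUdef, hx, hcover x hx px]) y
        (by simp [hUdef, hy, hcover y hy py]) hxy hyx
  · have dich : ∀ a ∈ s, ∀ b ∈ s, ¬a ≤ b → ¬b ≤ a →
        (∀ u ∈ s, u ≤ a ∨ u ≤ b) ∨ (∀ v ∈ s, a ≤ v ∨ b ≤ v) := by
      intro a ha b hb h1 h2
      by_contra hcon
      push_neg at hcon
      obtain ⟨⟨u, hu, hu2⟩, ⟨v, hv, hv2⟩⟩ := hcon
      exact hca ⟨a, ha, b, hb, ⟨h1, h2⟩, ⟨u, hu, hu2.1, hu2.2⟩, ⟨v, hv, hv2.1, hv2.2⟩⟩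
    by_cases hch : ∃ a ∈ s, ∃ b ∈ s, ¬a ≤ b ∧ ¬b ≤ a
    · obtain ⟨a, ha, b, hb, hab, hba⟩ := hch
      rcases dich a ha b hb hab hba with hD | hU
      · -- every element of s is ≤ a or ≤ b; a is maximal
        have hamax : ∀ z ∈ s, a ≤ z → z = a := by
          intro z hz haz
          rcases hD z hz with h | h
          · exact le_antisymm h haz
          · exact absurd (haz.trans h) hab
        set t := s.filter (· ≤ a) with htdef
        obtain ⟨x, hxt, hxmin⟩ : ∃ x ∈ t, ∀ x' ∈ t, ¬x' < x := by
          obtain ⟨x, hx⟩ := Finset.exists_minimal (s := t) ⟨a, by simp [htdef, ha]⟩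
          exact ⟨x, hx.1, fun y hy hlt => lt_irrefl x (lt_of_le_of_lt (hx.2 hy hlt.le) hlt)⟩
        have hxs : x ∈ s := (Finset.mem_filter.1 hxt).1
        have hxa : x ≤ a := by
          have := (Finset.mem_filter.1 hxt).2
          simpa using this
        have hxbot : ∀ z ∈ s, z ≤ x → z = x := by
          intro z hz hzx
          have hzt : z ∈ t := by simp [htdef, hz, hzx.trans hxa]
          by_contra hne
          exact hxmin z hzt (lt_of_le_of_ne hzx hne)
        refine ⟨fun z => if z = x ∨ z = a then true else false, ?_⟩
        intro u hu v hv huv hvu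
        by_cases pu : u = x ∨ u = a <;> by_cases pv : v = x ∨ v = a
        · exfalso
          rcases pu with rfl | rfl <;> rcases pv with rfl | rfl
          · exact huv le_rfl
          · exact huv hxa
          · exact hvu hxa
          · exact huv le_rfl
        · simp [pu, pv]
        · simp [pu, pv]
        · exfalso
          push_neg at pu pv
          rcases dich u hu v hv huv hvu with h | h
          · rcases h a ha with h' | h'
            · exact pu.2 (hamax u hu h')
            · exact pv.2 (hamax v hv h')
          · rcases h x hxs with h' | h'
            · exact pu.1 (hxbot u hu h')
            · exact pv.1 (hxbot v hv h')
      · -- every element of s is ≥ a or ≥ b; a is minimal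
        have hamin : ∀ z ∈ s, z ≤ a → z = a := by
          intro z hz hza
          rcases hU z hz with h | h
          · exact le_antisymm hza h
          · exact absurd (h.trans hza) hba
        set t := s.filter (a ≤ ·) with htdef
        obtain ⟨x, hxt, hxmax⟩ : ∃ x ∈ t, ∀ x' ∈ t, ¬x < x' := by
          obtain ⟨x, hx⟩ := Finset.exists_maximal (s := t) ⟨a, by simp [htdef, ha]⟩
          exact ⟨x, hx.1, fun y hy hlt => lt_irrefl x (lt_of_lt_of_le hlt (hx.2 hy hlt.le))⟩
        have hxs : x ∈ s := (Finset.mem_filter.1 hxt).1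
        have hax : a ≤ x := by
          have := (Finset.mem_filter.1 hxt).2
          simpa using this
        have hxtop : ∀ z ∈ s, x ≤ z → z = x := by
          intro z hz hxz
          have hzt : z ∈ t := by simp [htdef, hz, hax.trans hxz]
          by_contra hne
          exact hxmax z hzt (lt_of_le_of_ne hxz (Ne.symm hne))
        refine ⟨fun z => if z = x ∨ z = a then true else false, ?_⟩
        intro u hu v hv huv hvu
        by_cases pu : u = x ∨ u = a <;> by_cases pv : v = x ∨ v = a
        · exfalso
          rcases pu with rfl | rfl <;> rcases pv with rfl | rfl
          · exact huv le_rfl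
          · exact hvu hax
          · exact huv hax
          · exact huv le_rfl
        · simp [pu, pv]
        · simp [pu, pv]
        · exfalso
          push_neg at pu pv
          rcases dich u hu v hv huv hvu with h | h
          · rcases h x hxs with h' | h'
            · exact pu.1 (hxtop u hu h')
            · exact pv.1 (hxtop v hv h')
          · rcases h a ha with h' | h'
            · exact pu.2 (hamin u hu h')
            · exact pv.2 (hamin v hv h')
    · refine ⟨fun _ => false, ?_⟩
      intro x hx y hy h1 h2
      exact absurd ⟨x, hx, y, hy, h1, h2⟩ hch

private def Rb (f : α → Bool) (b : Bool) (x y : α) : Prop :=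
  x ≤ y ∨ (¬x ≤ y ∧ ¬y ≤ x ∧ f x = b)

private lemma Rb_linear (f : α → Bool) (hf : ∀ x y : α, ¬x ≤ y → ¬y ≤ x → f x ≠ f y)
    (b : Bool) : IsLinearOrder α (Rb f b) := by
  have htrans : ∀ x y z : α, Rb f b x y → Rb f b y z → Rb f b x z := by
    intro x y z hxy hyz
    rcases hxy with h1 | ⟨h1, h1', h1f⟩ <;> rcases hyz with h2 | ⟨h2, h2', h2f⟩
    · exact Or.inl (h1.trans h2)
    · -- x ≤ y, y ‖ z
      by_cases hxz : x ≤ z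
      · exact Or.inl hxz
      have hzx : ¬z ≤ x := fun h => h2' (h.trans h1)
      refine Or.inr ⟨hxz, hzx, ?_⟩
      by_contra hxf
      have hzf : f z ≠ b := fun h => (hf y z h2 h2') (h2f.trans h.symm)
      have : f x = f z := by
        revert hxf hzf
        cases f x <;> cases f z <;> cases b <;> decide
      exact (hf x z hxz hzx) this
    · -- x ‖ y, y ≤ z
      by_cases hxz : x ≤ z
      · exact Or.inl hxz
      have hzx : ¬z ≤ x := fun h => h1' (h2.trans h)
      exact Or.inr ⟨hxz, hzx, h1f⟩
    · exact absurd (h1f.trans h2f.symm) (hf x y h1 h1')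
  have htotal : ∀ x y : α, Rb f b x y ∨ Rb f b y x := by
    intro x y
    by_cases h1 : x ≤ y
    · exact Or.inl (Or.inl h1)
    by_cases h2 : y ≤ x
    · exact Or.inr (Or.inl h2)
    have := hf x y h1 h2
    by_cases hx : f x = b
    · exact Or.inl (Or.inr ⟨h1, h2, hx⟩)
    · refine Or.inr (Or.inr ⟨h2, h1, ?_⟩)
      revert hx this
      cases f x <;> cases f y <;> cases b <;> decide
  have hanti : ∀ x y : α, Rb f b x y → Rb f b y x → x = y := by
    intro x y hxy hyx
    rcases hxy with h1 | ⟨h1, h1', h1f⟩ <;> rcases hyx with h2 | ⟨h2, h2', h2f⟩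
    · exact le_antisymm h1 h2
    · exact absurd h1 h2'
    · exact absurd h2 h1'
    · exact absurd (h1f.trans h2f.symm) (hf x y h1 h1')
  exact
    { refl := fun x => Or.inl le_rfl
      trans := htrans
      antisymm := hanti
      total := htotal }

end aux

/-- Every finite partial order of width 2 has order dimension at most 2. -/
theorem stmt_2 (α : Type*) [Fintype α] [PartialOrder α]
    (hw : ∀ s : Finset α, IsAntichain (· ≤ ·) (s : Set α) → s.card ≤ 2) :
    ∃ L : Fin 2 → α → α → Prop,
      (∀ i, IsLinearOrder α (L i)) ∧
      ∀ x y : α, x ≤ y ↔ ∀ i, L i x y := by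
  classical
  obtain ⟨f, hf0⟩ := exists_coloring hw Finset.univ
  have hf : ∀ x y : α, ¬x ≤ y → ¬y ≤ x → f x ≠ f y := fun x y h1 h2 =>
    hf0 x (Finset.mem_univ x) y (Finset.mem_univ y) h1 h2
  refine ⟨fun i => Rb f (if i = 0 then false else true), ?_, ?_⟩
  · intro i
    exact Rb_linear f hf _
  · intro x y
    constructor
    · intro h i
      exact Or.inl h
    · intro h
      by_contra hxy
      have h0 := h 0
      have h1 := h 1
      simp only [Rb] at h0 h1
      rcases h0 with h0 | ⟨_, _, h0f⟩
      · exact hxy h0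
      rcases h1 with h1 | ⟨_, _, h1f⟩
      · exact hxy h1
      simp at h0f h1f
      rw [h0f] at h1f
      exact Bool.false_ne_true h1f
end

section
/- For every finite partial order P, the order dimension of P is at most the width of P. -/
open Finset

section Dilworth

variable {α : Type*} [PartialOrder α]

/-- Dilworth's theorem (Galvin's proof): if every antichain inside `s` has size at most `k`,
then `s` can be covered by at most `k` chains. -/
theorem dilworth_aux : ∀ s : Finset α, ∀ k : ℕ,
    (∀ t ⊆ s, IsAntichain (· ≤ ·) (t : Set α) → t.card ≤ k) →
    ∃ P : Finset (Finset α), P.card ≤ k ∧ (∀ c ∈ P, c ⊆ s ∧ IsChain (· ≤ ·) (c : Set α)) ∧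
      ∀ x ∈ s, ∃ c ∈ P, x ∈ c := by
  classical
  intro s
  induction s using Finset.strongInduction with
  | _ s ih =>
  intro k hk
  by_cases hs : s.Nonempty
  swap
  · exact ⟨∅, by simp, by simp, fun x hx => absurd ⟨x, hx⟩ hs⟩
  obtain ⟨x₀, hx₀⟩ := hs
  have hk1 : 1 ≤ k := by
    have := hk {x₀} (by simpa using hx₀) (by simp [Set.Subsingleton.isAntichain])
    simpa using this
  -- pick a chain of maximal cardinality inside s
  set 𝒞 : Finset (Finset α) := s.powerset.filter (fun c => IsChain (· ≤ ·) (c : Set α)) with h𝒞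
  have h𝒞mem : ∀ c, c ∈ 𝒞 ↔ c ⊆ s ∧ IsChain (· ≤ ·) (c : Set α) := by
    intro c; simp [h𝒞, Finset.mem_filter, Finset.mem_powerset]
  have hsingleton : ({x₀} : Finset α) ∈ 𝒞 := by
    rw [h𝒞mem]
    exact ⟨by simpa using hx₀, by simpa using Set.isChain_singleton (· ≤ ·) x₀⟩
  obtain ⟨C, hC𝒞, hCmax⟩ := Finset.exists_max_image 𝒞 Finset.card ⟨_, hsingleton⟩
  obtain ⟨hCs, hCchain⟩ := (h𝒞mem C).1 hC𝒞
  have hCne : C.Nonempty := by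
    have := hCmax _ hsingleton
    simp only [card_singleton] at this
    exact Finset.card_pos.1 (by omega)
  -- no element outside C can be added to C keeping it a chain
  have hCins : ∀ a ∈ s, a ∉ C → ¬ IsChain (· ≤ ·) ((insert a C : Finset α) : Set α) := by
    intro a has hac hch
    have hmem : insert a C ∈ 𝒞 := by
      rw [h𝒞mem]
      exact ⟨Finset.insert_subset has hCs, hch⟩
    have := hCmax _ hmem
    rw [Finset.card_insert_of_notMem hac] at this
    omega
  -- greatest and least elements of C
  obtain ⟨m, hmC, hm⟩ := Finset.exists_max_image C (fun x => toLinearExtension x) hCne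
  obtain ⟨m', hm'C, hm'⟩ := Finset.exists_min_image C (fun x => toLinearExtension x) hCne
  have hmtop : ∀ b ∈ C, b ≤ m := by
    intro b hb
    rcases eq_or_ne b m with rfl | hne
    · exact le_refl _
    rcases hCchain hb hmC hne with h | h
    · exact h
    · have : toLinearExtension m = toLinearExtension b :=
        le_antisymm (toLinearExtension.monotone h) (hm b hb)
      have : m = b := congrArg id this
      exact this ▸ le_refl _
  have hm'bot : ∀ b ∈ C, m' ≤ b := by
    intro b hb
    rcases eq_or_ne b m' with rfl | hne
    · exact le_refl _
    rcases hCchain hb hm'C hne with h | h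
    · have : toLinearExtension b = toLinearExtension m' :=
        le_antisymm (toLinearExtension.monotone h) (hm' b hb)
      have : b = m' := congrArg id this
      exact this ▸ le_refl _
    · exact h
  by_cases hA : ∃ t ⊆ s \ C, IsAntichain (· ≤ ·) (t : Set α) ∧ t.card = k
  · -- case there is a full-size antichain avoiding C
    obtain ⟨A, hAsub, hAanti, hAcard⟩ := hA
    have hAs : A ⊆ s := hAsub.trans (Finset.sdiff_subset)
    have hcomp : ∀ x ∈ s, (∃ a ∈ A, x ≤ a) ∨ (∃ a ∈ A, a ≤ x) := by
      intro x hx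
      by_contra h
      push_neg at h
      obtain ⟨h1, h2⟩ := h
      have hxA : x ∉ A := fun hmem => (h1 x hmem (le_refl x)).elim
      have hanti : IsAntichain (· ≤ ·) ((insert x A : Finset α) : Set α) := by
        rw [Finset.coe_insert]
        exact hAanti.insert (fun b hb _ => h2 b hb) (fun b hb _ => h1 b hb)
      have := hk _ (Finset.insert_subset hx hAs) hanti
      rw [Finset.card_insert_of_notMem hxA, hAcard] at this
      omega
    set D : Finset α := s.filter (fun x => ∃ a ∈ A, x ≤ a) with hD
    set U : Finset α := s.filter (fun x => ∃ a ∈ A, a ≤ x) with hU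
    have hAD : A ⊆ D := fun a ha =>
      Finset.mem_filter.2 ⟨hAs ha, a, ha, le_refl a⟩
    have hAU : A ⊆ U := fun a ha =>
      Finset.mem_filter.2 ⟨hAs ha, a, ha, le_refl a⟩
    -- m is not in D
    have hmD : m ∉ D := by
      intro hmem
      obtain ⟨-, a, haA, hma⟩ := Finset.mem_filter.1 hmem
      have haC : a ∉ C := (Finset.mem_sdiff.1 (hAsub haA)).2
      refine hCins a (hAs haA) haC ?_
      rw [Finset.coe_insert]
      intro p hp q hq hne
      rcases hp with rfl | hp <;> rcases hq with rfl | hq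
      · exact absurd rfl hne
      · exact Or.inr ((hmtop q hq).trans hma)
      · exact Or.inl ((hmtop p hp).trans hma)
      · exact hCchain hp hq hne
    have hm'U : m' ∉ U := by
      intro hmem
      obtain ⟨-, a, haA, hma⟩ := Finset.mem_filter.1 hmem
      have haC : a ∉ C := (Finset.mem_sdiff.1 (hAsub haA)).2
      refine hCins a (hAs haA) haC ?_
      rw [Finset.coe_insert]
      intro p hp q hq hne
      rcases hp with rfl | hp <;> rcases hq with rfl | hq
      · exact absurd rfl hne
      · exact Or.inl (hma.trans (hm'bot q hq))
      · exact Or.inr (hma.trans (hm'bot p hp))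
      · exact hCchain hp hq hne
    have hDss : D ⊂ s :=
      Finset.ssubset_iff_of_subset (Finset.filter_subset _ _) |>.2
        ⟨m, hCs hmC, hmD⟩
    have hUss : U ⊂ s :=
      Finset.ssubset_iff_of_subset (Finset.filter_subset _ _) |>.2
        ⟨m', hCs hm'C, hm'U⟩
    obtain ⟨PD, hPDcard, hPDc, hPDcov⟩ := ih D hDss k
      (fun t ht hanti => hk t (ht.trans (Finset.filter_subset _ _)) hanti)
    obtain ⟨PU, hPUcard, hPUc, hPUcov⟩ := ih U hUss k
      (fun t ht hanti => hk t (ht.trans (Finset.filter_subset _ _)) hanti)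
    -- each a ∈ A lies in a chain of PD; that chain is unique per a and a is its top
    have hchoiceD : ∀ a ∈ A, ∃ c ∈ PD, a ∈ c := fun a ha => hPDcov a (hAD ha)
    have hchoiceU : ∀ a ∈ A, ∃ c ∈ PU, a ∈ c := fun a ha => hPUcov a (hAU ha)
    set fD : ∀ a ∈ A, Finset α := fun a ha => (hchoiceD a ha).choose with hfD
    set fU : ∀ a ∈ A, Finset α := fun a ha => (hchoiceU a ha).choose with hfU
    have hfDspec : ∀ a ha, fD a ha ∈ PD ∧ a ∈ fD a ha := by
      intro a ha
      obtain ⟨h1, h2⟩ := (hchoiceD a ha).choose_spec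
      exact ⟨h1, h2⟩
    have hfUspec : ∀ a ha, fU a ha ∈ PU ∧ a ∈ fU a ha := by
      intro a ha
      obtain ⟨h1, h2⟩ := (hchoiceU a ha).choose_spec
      exact ⟨h1, h2⟩
    have hAeq : ∀ a ∈ A, ∀ a' ∈ A, (a ≤ a' → a = a') := by
      intro a ha a' ha' hle
      by_contra hne
      exact hAanti ha ha' hne hle
    have hinjD : ∀ a₁ a₂ ha₁ ha₂, fD a₁ ha₁ = fD a₂ ha₂ → a₁ = a₂ := by
      intro a₁ a₂ ha₁ ha₂ heq
      by_contra hne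
      have h1 : a₁ ∈ fD a₁ ha₁ := (hfDspec a₁ ha₁).2
      have h2 : a₂ ∈ fD a₁ ha₁ := heq ▸ (hfDspec a₂ ha₂).2
      have hch := (hPDc _ (hfDspec a₁ ha₁).1).2
      rcases hch h1 h2 hne with h | h
      · exact hne (hAeq _ ha₁ _ ha₂ h)
      · exact hne ((hAeq _ ha₂ _ ha₁ h).symm)
    have hinjU : ∀ a₁ a₂ ha₁ ha₂, fU a₁ ha₁ = fU a₂ ha₂ → a₁ = a₂ := by
      intro a₁ a₂ ha₁ ha₂ heq
      by_contra hne
      have h1 : a₁ ∈ fU a₁ ha₁ := (hfUspec a₁ ha₁).2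
      have h2 : a₂ ∈ fU a₁ ha₁ := heq ▸ (hfUspec a₂ ha₂).2
      have hch := (hPUc _ (hfUspec a₁ ha₁).1).2
      rcases hch h1 h2 hne with h | h
      · exact hne (hAeq _ ha₁ _ ha₂ h)
      · exact hne ((hAeq _ ha₂ _ ha₁ h).symm)
    have hsurjD : ∀ c ∈ PD, ∃ a ha, c = fD a ha :=
      Finset.surj_on_of_inj_on_of_card_le fD (fun a ha => (hfDspec a ha).1) hinjD
        (by rw [hAcard]; exact hPDcard)
    have hsurjU : ∀ c ∈ PU, ∃ a ha, c = fU a ha :=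
      Finset.surj_on_of_inj_on_of_card_le fU (fun a ha => (hfUspec a ha).1) hinjU
        (by rw [hAcard]; exact hPUcard)
    -- a is the top of fD a and the bottom of fU a
    have htopD : ∀ a ha, ∀ x ∈ fD a ha, x ≤ a := by
      intro a ha x hx
      have hxD : x ∈ D := (hPDc _ (hfDspec a ha).1).1 hx
      obtain ⟨-, a', ha', hxa'⟩ := Finset.mem_filter.1 hxD
      rcases eq_or_ne x a with rfl | hne
      · exact le_refl _
      rcases (hPDc _ (hfDspec a ha).1).2 hx (hfDspec a ha).2 hne with h | h
      · exact h
      · have : a = a' := hAeq _ ha _ ha' (h.trans hxa')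
        rw [this]; exact hxa'
    have hbotU : ∀ a ha, ∀ x ∈ fU a ha, a ≤ x := by
      intro a ha x hx
      have hxU : x ∈ U := (hPUc _ (hfUspec a ha).1).1 hx
      obtain ⟨-, a', ha', hxa'⟩ := Finset.mem_filter.1 hxU
      rcases eq_or_ne x a with rfl | hne
      · exact le_refl _
      rcases (hPUc _ (hfUspec a ha).1).2 hx (hfUspec a ha).2 hne with h | h
      · have : a' = a := hAeq _ ha' _ ha (hxa'.trans h)
        rw [← this]; exact hxa'
      · exact h
    refine ⟨A.attach.image (fun a => fD a.1 a.2 ∪ fU a.1 a.2), ?_, ?_, ?_⟩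
    · calc _ ≤ A.attach.card := Finset.card_image_le
        _ = k := by rw [Finset.card_attach, hAcard]
    · intro c hc
      obtain ⟨⟨a, ha⟩, -, rfl⟩ := Finset.mem_image.1 hc
      constructor
      · refine Finset.union_subset ?_ ?_
        · exact ((hPDc _ (hfDspec a ha).1).1).trans (Finset.filter_subset _ _)
        · exact ((hPUc _ (hfUspec a ha).1).1).trans (Finset.filter_subset _ _)
      · rw [Finset.coe_union]
        intro p hp q hq hne
        rcases hp with hp | hp <;> rcases hq with hq | hq
        · exact (hPDc _ (hfDspec a ha).1).2 hp hq hne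
        · exact Or.inl ((htopD a ha p hp).trans (hbotU a ha q hq))
        · exact Or.inr ((htopD a ha q hq).trans (hbotU a ha p hp))
        · exact (hPUc _ (hfUspec a ha).1).2 hp hq hne
    · intro x hx
      rcases hcomp x hx with h | h
      · have hxD : x ∈ D := Finset.mem_filter.2 ⟨hx, h⟩
        obtain ⟨c, hcPD, hxc⟩ := hPDcov x hxD
        obtain ⟨a, ha, rfl⟩ := hsurjD c hcPD
        exact ⟨fD a ha ∪ fU a ha,
          Finset.mem_image.2 ⟨⟨a, ha⟩, Finset.mem_attach _ _, rfl⟩,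
          Finset.mem_union_left _ hxc⟩
      · have hxU : x ∈ U := Finset.mem_filter.2 ⟨hx, h⟩
        obtain ⟨c, hcPU, hxc⟩ := hPUcov x hxU
        obtain ⟨a, ha, rfl⟩ := hsurjU c hcPU
        exact ⟨fD a ha ∪ fU a ha,
          Finset.mem_image.2 ⟨⟨a, ha⟩, Finset.mem_attach _ _, rfl⟩,
          Finset.mem_union_right _ hxc⟩
  · -- case every antichain avoiding C has size < k
    push_neg at hA
    have hbound : ∀ t ⊆ s \ C, IsAntichain (· ≤ ·) (t : Set α) → t.card ≤ k - 1 := by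
      intro t ht hanti
      have h1 := hk t (ht.trans Finset.sdiff_subset) hanti
      have h2 := hA t ht hanti
      omega
    obtain ⟨P', hP'card, hP'c, hP'cov⟩ :=
      ih (s \ C) (Finset.sdiff_ssubset hCs hCne) (k - 1) hbound
    refine ⟨insert C P', ?_, ?_, ?_⟩
    · calc _ ≤ P'.card + 1 := Finset.card_insert_le _ _
        _ ≤ (k - 1) + 1 := by omega
        _ = k := by omega
    · intro c hc
      rcases Finset.mem_insert.1 hc with rfl | hc
      · exact ⟨hCs, hCchain⟩
      · exact ⟨(hP'c c hc).1.trans Finset.sdiff_subset, (hP'c c hc).2⟩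
    · intro x hx
      by_cases hxC : x ∈ C
      · exact ⟨C, Finset.mem_insert_self _ _, hxC⟩
      · obtain ⟨c, hc, hxc⟩ := hP'cov x (Finset.mem_sdiff.2 ⟨hx, hxC⟩)
        exact ⟨c, Finset.mem_insert_of_mem hc, hxc⟩

end Dilworth

/-- For a finite partial order, the order dimension is at most the width:
if every antichain has size at most w then there is a realizer of size w. -/
theorem stmt_3 (α : Type*) [Fintype α] [PartialOrder α] (w : ℕ)
    (hw : ∀ s : Finset α, IsAntichain (· ≤ ·) (s : Set α) → s.card ≤ w) :
    ∃ L : Fin w → α → α → Prop,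
      (∀ i, IsLinearOrder α (L i)) ∧
      ∀ x y : α, x ≤ y ↔ ∀ i, L i x y := by
  classical
  obtain ⟨P, hPcard, hPc, hPcov⟩ := dilworth_aux (Finset.univ : Finset α) w
    (fun t _ hanti => hw t hanti)
  -- enumerate the chains by Fin w (padding with ∅)
  set ch : Fin w → Finset α := fun i => P.toList.getD i ∅ with hch
  have hchain : ∀ i, IsChain (· ≤ ·) ((ch i : Finset α) : Set α) := by
    intro i
    by_cases hi : (i : ℕ) < P.toList.length
    · have : ch i ∈ P := by
        rw [hch]
        simp only [List.getD_eq_getElem _ _ hi]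
        exact Finset.mem_toList.1 (P.toList.getElem_mem hi)
      exact (hPc _ this).2
    · have : ch i = ∅ := by
        rw [hch]; exact List.getD_eq_default _ _ (by omega)
      rw [this]; simp [IsChain]
  have hcov : ∀ x : α, ∃ i : Fin w, x ∈ ch i := by
    intro x
    obtain ⟨c, hcP, hxc⟩ := hPcov x (Finset.mem_univ x)
    obtain ⟨j, hj, hjc⟩ := List.getElem_of_mem (Finset.mem_toList.2 hcP)
    have hjw : j < w := lt_of_lt_of_le (by simpa [Finset.length_toList] using hj) hPcard
    refine ⟨⟨j, hjw⟩, ?_⟩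
    show x ∈ P.toList.getD j ∅
    rw [List.getD_eq_getElem _ _ hj, hjc]
    exact hxc
  -- the "rank" function along chain c
  set g : Finset α → α → ℕ := fun c x => (c.filter (fun z => ¬ x ≤ z)).card with hg
  have hgmono : ∀ c, ∀ x y : α, x ≤ y → g c x ≤ g c y := by
    intro c x y hxy
    apply Finset.card_le_card
    intro z hz
    obtain ⟨hzc, hz⟩ := Finset.mem_filter.1 hz
    exact Finset.mem_filter.2 ⟨hzc, fun h => hz (hxy.trans h)⟩
  have hgstrict : ∀ i, ∀ a b : α, a ∈ ch i → ¬ a ≤ b → ¬ b ≤ a → g (ch i) a < g (ch i) b := by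
    intro i a b ha hab hba
    apply Finset.card_lt_card
    constructor
    · intro z hz
      obtain ⟨hzc, hz⟩ := Finset.mem_filter.1 hz
      refine Finset.mem_filter.2 ⟨hzc, fun h => ?_⟩
      have hne : z ≠ a := fun he => hz (he ▸ le_refl a)
      rcases hchain i hzc ha hne with h' | h'
      · exact hba (h.trans h')
      · exact hz h'
    · intro hsub
      have : a ∈ (ch i).filter (fun z => ¬ b ≤ z) := Finset.mem_filter.2 ⟨ha, hba⟩
      have := hsub this
      exact (Finset.mem_filter.1 this).2 (le_refl a)
  refine ⟨fun i x y => g (ch i) x < g (ch i) y ∨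
      (g (ch i) x = g (ch i) y ∧ toLinearExtension x ≤ toLinearExtension y), ?_, ?_⟩
  · intro i
    refine { refl := ?_, trans := ?_, antisymm := ?_, total := ?_ }
    · -- refl
      intro x
      exact Or.inr ⟨rfl, le_refl _⟩
    · -- trans
      intro x y z hxy hyz
      rcases hxy with h | ⟨h1, h2⟩ <;> rcases hyz with h' | ⟨h1', h2'⟩
      · exact Or.inl (h.trans h')
      · exact Or.inl (h1' ▸ h)
      · exact Or.inl (h1 ▸ h')
      · exact Or.inr ⟨h1.trans h1', h2.trans h2'⟩
    · -- antisymm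
      intro x y hxy hyx
      rcases hxy with h | ⟨h1, h2⟩ <;> rcases hyx with h' | ⟨h1', h2'⟩
      · omega
      · omega
      · omega
      · have : toLinearExtension x = toLinearExtension y := le_antisymm h2 h2'
        exact congrArg id this
    · -- total
      intro x y
      rcases lt_trichotomy (g (ch ↑i) x) (g (ch ↑i) y) with h | h | h
      · exact Or.inl (Or.inl h)
      · rcases le_total (toLinearExtension x) (toLinearExtension y) with h' | h'
        · exact Or.inl (Or.inr ⟨h, h'⟩)
        · exact Or.inr (Or.inr ⟨h.symm, h'⟩)
      · exact Or.inr (Or.inl h)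
  · intro x y
    constructor
    · intro hxy i
      rcases lt_or_eq_of_le (hgmono (ch i) x y hxy) with h | h
      · exact Or.inl h
      · exact Or.inr ⟨h, toLinearExtension.monotone hxy⟩
    · intro h
      by_contra hxy
      by_cases hyx : y ≤ x
      · -- then y < x; any index gives a contradiction, need w > 0
        have hne : x ≠ y := fun he => hxy (he ▸ le_refl x)
        have hw0 : 0 < w := by
          have := hw {x} (by simp [Set.Subsingleton.isAntichain])
          simp at this; omega
        rcases h ⟨0, hw0⟩ with h' | ⟨h1, h2⟩
        · exact absurd h' (not_lt.2 (hgmono _ y x hyx))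
        · have hle : toLinearExtension y ≤ toLinearExtension x :=
            toLinearExtension.monotone hyx
          have : toLinearExtension x = toLinearExtension y := le_antisymm h2 hle
          exact hne (congrArg id this)
      · -- incomparable: use the chain containing y
        obtain ⟨i, hyi⟩ := hcov y
        have hlt := hgstrict i y x hyi hyx hxy
        rcases h i with h' | ⟨h1, h2⟩
        · omega
        · omega
end

section
/- Let G be an acyclic digraph, C a channel, and u, v vertices with u ∉ C, v ∉ C. If u reaches v, then Proj_C(u) equals Proj_C(v) or Proj_C(u) precedes Proj_C(v) in C; in particular the position of Proj_C(u) in C is at most the position of Proj_C(v). -/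
/-- Reachability in a digraph: reflexive-transitive closure of the edge relation. -/
def reaches {V : Type*} (E : V → V → Prop) : V → V → Prop :=
  Relation.ReflTransGen E

/-- If u, v do not lie on the channel C and u reaches v, then Proj_C(u) equals
Proj_C(v) or precedes it in C; in particular its position is at most that of
Proj_C(v). -/
theorem stmt_7 {V : Type*} [DecidableEq V] (E : V → V → Prop)
    (C : List V) (hC : C.Pairwise (reaches E)) (hnd : C.Nodup)
    (u v : V) (hu : u ∉ C) (hv : v ∉ C) (huv : reaches E u v)
    (pu pv : V) (hpu : pu ∈ C) (hpv : pv ∈ C)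
    (hpur : reaches E u pu)
    (hpumin : ∀ w ∈ C, reaches E u w → C.idxOf pu ≤ C.idxOf w)
    (hpvr : reaches E v pv)
    (hpvmin : ∀ w ∈ C, reaches E v w → C.idxOf pv ≤ C.idxOf w) :
    (pu = pv ∨ C.idxOf pu < C.idxOf pv) ∧ C.idxOf pu ≤ C.idxOf pv := by
  have h : C.idxOf pu ≤ C.idxOf pv := hpumin pv hpv (huv.trans hpvr)
  refine ⟨?_, h⟩
  rcases h.lt_or_eq with h' | h'
  · exact Or.inr h'
  · exact Or.inl ((List.idxOf_inj hpu).mp h')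
end

section
/- Let G be a finite acyclic digraph whose vertex set is partitioned into two channels C1 and C2. Define coordinates: for v ∈ C1, X(v) = position of v in C1 and Y(v) = position of Proj_{C2}(v) in C2; for v ∈ C2, Y(v) = position of v in C2 and X(v) = position of Proj_{C1}(v) in C1. Then any two distinct vertices receive distinct coordinate pairs. -/
/-- In the 2-channel dominance drawing (Algorithm 2D-Draw), any two distinct
vertices receive distinct coordinate pairs. -/
theorem stmt_8 {V : Type*} [Fintype V] [DecidableEq V] (E : V → V → Prop)
    (hacyc : ∀ u v : V, reaches E u v → reaches E v u → u = v)
    (s t : V) (hs : ∀ v, reaches E s v) (ht : ∀ v, reaches E v t)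
    (C1 C2 : List V)
    (hC1 : C1.Pairwise (reaches E)) (hC2 : C2.Pairwise (reaches E))
    (hnd1 : C1.Nodup) (hnd2 : C2.Nodup)
    (hsC : s ∈ C1 ∧ s ∈ C2) (htC : t ∈ C1 ∧ t ∈ C2)
    (hcover : ∀ v : V, v ∈ C1 ∨ v ∈ C2)
    (honly : ∀ v : V, v ≠ s → v ≠ t → ¬(v ∈ C1 ∧ v ∈ C2))
    (X Y : V → ℕ)
    (hX1 : ∀ v ∈ C1, X v = C1.idxOf v)
    (hY2 : ∀ v ∈ C2, Y v = C2.idxOf v)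
    (hY1 : ∀ v ∈ C1, ∃ p ∈ C2, Y v = C2.idxOf p ∧ reaches E v p ∧
        ∀ w ∈ C2, reaches E v w → C2.idxOf p ≤ C2.idxOf w)
    (hX2 : ∀ v ∈ C2, ∃ p ∈ C1, X v = C1.idxOf p ∧ reaches E v p ∧
        ∀ w ∈ C1, reaches E v w → C1.idxOf p ≤ C1.idxOf w) :
    ∀ u v : V, u ≠ v → X u ≠ X v ∨ Y u ≠ Y v := by
  -- helper: both in C1 with equal X implies equal
  have keyX : ∀ u ∈ C1, ∀ v ∈ C1, X u = X v → u = v := by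
    intro u hu v hv h
    rw [hX1 u hu, hX1 v hv] at h
    exact (List.idxOf_inj (y := v) hu).1 h
  have keyY : ∀ u ∈ C2, ∀ v ∈ C2, Y u = Y v → u = v := by
    intro u hu v hv h
    rw [hY2 u hu, hY2 v hv] at h
    exact (List.idxOf_inj (y := v) hu).1 h
  -- mixed case: u ∈ C1, v ∈ C2, equal coordinates ⇒ equal
  have mixed : ∀ u ∈ C1, ∀ v ∈ C2, X u = X v → Y u = Y v → u = v := by
    intro u hu v hv hx hy
    obtain ⟨p, hpC1, hXv, hvp, -⟩ := hX2 v hv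
    obtain ⟨q, hqC2, hYu, huq, -⟩ := hY1 u hu
    have hup : u = p := by
      apply (List.idxOf_inj (y := p) hu).1
      rw [← hX1 u hu, hx, hXv]
    have hvq : q = v := by
      apply (List.idxOf_inj (y := v) hqC2).1
      rw [← hYu, hy, hY2 v hv]
    exact hacyc u v (hvq ▸ huq) (hup ▸ hvp)
  intro u v huv
  by_contra hc
  push_neg at hc
  obtain ⟨hx, hy⟩ := hc
  rcases hcover u with hu | hu <;> rcases hcover v with hv | hv
  · exact huv (keyX u hu v hv hx)
  · exact huv (mixed u hu v hv hx hy)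
  · exact huv (mixed v hv u hu hx.symm hy.symm).symm
  · exact huv (keyY u hu v hv hy)
end

section
/- Let G be a finite acyclic digraph whose vertices are partitioned into two channels C1, C2 (sharing the source and sink). With coordinates X, Y assigned as follows — for v ∈ C1: X(v) = position of v in C1, Y(v) = position of Proj_{C2}(v); for v ∈ C2: Y(v) = position of v in C2, X(v) = position of Proj_{C1}(v) — the resulting placement is a dominance drawing: for all distinct u, v, u reaches v if and only if X(u) ≤ X(v) and Y(u) ≤ Y(v). -/
lemma chan_reach {V : Type*} [DecidableEq V] {E : V → V → Prop} {l : List V}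
    (hp : l.Pairwise (reaches E)) {u v : V} (hu : u ∈ l) (hv : v ∈ l)
    (h : l.idxOf u < l.idxOf v) : reaches E u v := by
  rw [List.pairwise_iff_getElem] at hp
  have := hp (l.idxOf u) (l.idxOf v) (List.idxOf_lt_length_iff.2 hu)
    (List.idxOf_lt_length_iff.2 hv) h
  simpa [List.getElem_idxOf] using this

lemma chan_reach_le {V : Type*} [DecidableEq V] {E : V → V → Prop} {l : List V}
    (hp : l.Pairwise (reaches E)) (hnd : l.Nodup) {u v : V} (hu : u ∈ l) (hv : v ∈ l)
    (h : l.idxOf u ≤ l.idxOf v) : reaches E u v := by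
  rcases eq_or_lt_of_le h with heq | hlt
  · have : u = v := (List.idxOf_inj hu).1 heq
    subst this; exact Relation.ReflTransGen.refl
  · exact chan_reach hp hu hv hlt

lemma reach_index_le {V : Type*} [DecidableEq V] {E : V → V → Prop}
    (hacyc : ∀ u v : V, reaches E u v → reaches E v u → u = v)
    {l : List V} (hp : l.Pairwise (reaches E)) {u v : V} (hu : u ∈ l) (hv : v ∈ l)
    (h : reaches E u v) : l.idxOf u ≤ l.idxOf v := by
  by_contra hc
  push_neg at hc
  have h2 := chan_reach hp hv hu hc
  have := hacyc u v h h2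
  subst this
  exact absurd hc (lt_irrefl _)

/-- The 2-channel drawing of Algorithm 2D-Draw is a dominance drawing: for all
distinct u, v, u reaches v iff X(u) ≤ X(v) and Y(u) ≤ Y(v). -/
theorem stmt_9 {V : Type*} [Fintype V] [DecidableEq V] (E : V → V → Prop)
    (hacyc : ∀ u v : V, reaches E u v → reaches E v u → u = v)
    (s t : V) (hs : ∀ v, reaches E s v) (ht : ∀ v, reaches E v t)
    (C1 C2 : List V)
    (hC1 : C1.Pairwise (reaches E)) (hC2 : C2.Pairwise (reaches E))
    (hnd1 : C1.Nodup) (hnd2 : C2.Nodup)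
    (hsC : s ∈ C1 ∧ s ∈ C2) (htC : t ∈ C1 ∧ t ∈ C2)
    (hcover : ∀ v : V, v ∈ C1 ∨ v ∈ C2)
    (honly : ∀ v : V, v ≠ s → v ≠ t → ¬(v ∈ C1 ∧ v ∈ C2))
    (X Y : V → ℕ)
    (hX1 : ∀ v ∈ C1, X v = C1.idxOf v)
    (hY2 : ∀ v ∈ C2, Y v = C2.idxOf v)
    (hY1 : ∀ v ∈ C1, ∃ p ∈ C2, Y v = C2.idxOf p ∧ reaches E v p ∧
        ∀ w ∈ C2, reaches E v w → C2.idxOf p ≤ C2.idxOf w)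
    (hX2 : ∀ v ∈ C2, ∃ p ∈ C1, X v = C1.idxOf p ∧ reaches E v p ∧
        ∀ w ∈ C1, reaches E v w → C1.idxOf p ≤ C1.idxOf w) :
    ∀ u v : V, u ≠ v → (reaches E u v ↔ X u ≤ X v ∧ Y u ≤ Y v) := by
  have monoX : ∀ a b : V, reaches E a b → X a ≤ X b := by
    intro a b hab
    rcases hcover a with ha1 | ha2
    · rw [hX1 a ha1]
      rcases hcover b with hb1 | hb2
      · rw [hX1 b hb1]; exact reach_index_le hacyc hC1 ha1 hb1 hab
      · obtain ⟨p, hp1, hXb, hbp, _⟩ := hX2 b hb2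
        rw [hXb]
        exact reach_index_le hacyc hC1 ha1 hp1 (Relation.ReflTransGen.trans hab hbp)
    · obtain ⟨p, hp1, hXa, hap, hmin⟩ := hX2 a ha2
      rw [hXa]
      rcases hcover b with hb1 | hb2
      · rw [hX1 b hb1]; exact hmin b hb1 hab
      · obtain ⟨q, hq1, hXb, hbq, _⟩ := hX2 b hb2
        rw [hXb]; exact hmin q hq1 (Relation.ReflTransGen.trans hab hbq)
  have monoY : ∀ a b : V, reaches E a b → Y a ≤ Y b := by
    intro a b hab
    rcases hcover a with ha2 | ha1
    case inr =>
      rw [hY2 a ha1]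
      rcases hcover b with hb2 | hb1
      case inr => rw [hY2 b hb1]; exact reach_index_le hacyc hC2 ha1 hb1 hab
      case inl =>
        obtain ⟨p, hp2, hYb, hbp, _⟩ := hY1 b hb2
        rw [hYb]
        exact reach_index_le hacyc hC2 ha1 hp2 (Relation.ReflTransGen.trans hab hbp)
    case inl =>
      obtain ⟨p, hp2, hYa, hap, hmin⟩ := hY1 a ha2
      rw [hYa]
      rcases hcover b with hb2 | hb1
      case inr => rw [hY2 b hb1]; exact hmin b hb1 hab
      case inl =>
        obtain ⟨q, hq2, hYb, hbq, _⟩ := hY1 b hb2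
        rw [hYb]; exact hmin q hq2 (Relation.ReflTransGen.trans hab hbq)
  intro u v huv
  constructor
  · intro h
    exact ⟨monoX u v h, monoY u v h⟩
  · rintro ⟨hx, hy⟩
    rcases hcover u with hu1 | hu2
    · rcases hcover v with hv1 | hv2
      · have hidx : C1.idxOf u ≤ C1.idxOf v := by
          rw [← hX1 u hu1, ← hX1 v hv1]; exact hx
        exact chan_reach_le hC1 hnd1 hu1 hv1 hidx
      · obtain ⟨p, hp2, hYu, hup, _⟩ := hY1 u hu1
        have hidx : C2.idxOf p ≤ C2.idxOf v := by
          rw [← hYu, ← hY2 v hv2]; exact hy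
        exact Relation.ReflTransGen.trans hup (chan_reach_le hC2 hnd2 hp2 hv2 hidx)
    · rcases hcover v with hv1 | hv2
      · obtain ⟨p, hp1, hXu, hup, _⟩ := hX2 u hu2
        have hidx : C1.idxOf p ≤ C1.idxOf v := by
          rw [← hXu, ← hX1 v hv1]; exact hx
        exact Relation.ReflTransGen.trans hup (chan_reach_le hC1 hnd1 hp1 hv1 hidx)
      · have hidx : C2.idxOf u ≤ C2.idxOf v := by
          rw [← hY2 u hu2, ← hY2 v hv2]; exact hy
        exact chan_reach_le hC2 hnd2 hu2 hv2 hidx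
end

section
/- Let G be a finite st-DAG with a channel decomposition S_c = {C_1, ..., C_k}. Assign to each vertex v the k-tuple D(v) where D_i(v) is the position of v in C_i if v ∈ C_i, and otherwise the position of Proj_{C_i}(v) in C_i. Then for all vertices u, v: u reaches v if and only if D_i(u) ≤ D_i(v) for all i = 1, ..., k, and distinct vertices receive distinct tuples. -/
/-- Algorithm kD-Draw produces a k-dimensional dominance drawing: u reaches v
iff all k coordinates of u are ≤ those of v, and distinct vertices receive
distinct tuples. -/
theorem stmt_10 {V : Type*} [Fintype V] [DecidableEq V] (E : V → V → Prop)
    (hacyc : ∀ u v : V, reaches E u v → reaches E v u → u = v)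
    (s t : V) (hs : ∀ v, reaches E s v) (ht : ∀ v, reaches E v t)
    (k : ℕ) (C : Fin k → List V)
    (hch : ∀ i, (C i).Pairwise (reaches E)) (hnd : ∀ i, (C i).Nodup)
    (hst : ∀ i, s ∈ C i ∧ t ∈ C i)
    (hcover : ∀ v : V, ∃ i, v ∈ C i)
    (hpart : ∀ v : V, v ≠ s → v ≠ t → ∃! i, v ∈ C i)
    (D : V → Fin k → ℕ)
    (hDin : ∀ i, ∀ v ∈ C i, D v i = (C i).idxOf v)
    (hDproj : ∀ i, ∀ v : V, v ∉ C i → ∃ p ∈ C i,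
        D v i = (C i).idxOf p ∧ reaches E v p ∧
        ∀ w ∈ C i, reaches E v w → (C i).idxOf p ≤ (C i).idxOf w) :
    (∀ u v : V, reaches E u v ↔ ∀ i, D u i ≤ D v i) ∧ Function.Injective D := by
  classical
  -- earlier (or equal) position in a channel implies reachability
  have chain : ∀ i, ∀ a ∈ C i, ∀ b ∈ C i,
      (C i).idxOf a ≤ (C i).idxOf b → reaches E a b := by
    intro i a ha b hb hle
    have h1 : (C i).idxOf a < (C i).length := List.idxOf_lt_length_iff.2 ha
    have h2 : (C i).idxOf b < (C i).length := List.idxOf_lt_length_iff.2 hb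
    rcases lt_or_eq_of_le hle with hlt | heq
    · have := List.pairwise_iff_get.1 (hch i) ⟨_, h1⟩ ⟨_, h2⟩ hlt
      rwa [List.idxOf_get h1, List.idxOf_get h2] at this
    · have hab : a = b := by
        rw [← List.idxOf_get h1, ← List.idxOf_get h2]
        congr 1
        exact Fin.ext heq
      exact hab ▸ Relation.ReflTransGen.refl
  -- uniform projection property
  have proj : ∀ (i : Fin k) (v : V), ∃ p ∈ C i,
      D v i = (C i).idxOf p ∧ reaches E v p ∧
      ∀ w ∈ C i, reaches E v w → (C i).idxOf p ≤ (C i).idxOf w := by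
    intro i v
    by_cases hv : v ∈ C i
    · refine ⟨v, hv, hDin i v hv, Relation.ReflTransGen.refl, ?_⟩
      intro w hw hvw
      by_contra hlt
      push_neg at hlt
      have hwv : reaches E w v := chain i w hw v hv (le_of_lt hlt)
      have heq : w = v := hacyc w v hwv hvw
      subst heq
      exact lt_irrefl _ hlt
    · exact hDproj i v hv
  have main : ∀ u v : V, reaches E u v ↔ ∀ i, D u i ≤ D v i := by
    intro u v
    constructor
    · intro huv i
      obtain ⟨p, hp, hDp, hvp, _⟩ := proj i v
      obtain ⟨q, hq, hDq, _, hqmin⟩ := proj i u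
      have hup : reaches E u p := Relation.ReflTransGen.trans huv hvp
      rw [hDp, hDq]
      exact hqmin p hp hup
    · intro h
      obtain ⟨j, hvj⟩ := hcover v
      obtain ⟨q, hq, hDq, huq, _⟩ := proj j u
      have h1 : (C j).idxOf q ≤ (C j).idxOf v := by
        rw [← hDq, ← hDin j v hvj]; exact h j
      exact Relation.ReflTransGen.trans huq (chain j q hq v hvj h1)
  refine ⟨main, ?_⟩
  intro u v huv
  have h1 : reaches E u v := (main u v).2 (fun i => (congrFun huv i).le)
  have h2 : reaches E v u := (main v u).2 (fun i => (congrFun huv i).ge)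
  exact hacyc u v h1 h2
end

section
/- The dominance drawing dimension of any finite st-DAG G with n vertices is at most min(n/2, w_G), where w_G is the width of G (maximum number of pairwise incomparable vertices). -/
open scoped Classical

namespace DDim
open Finset

variable {V : Type*} [PartialOrder V]


/-- antichain as a Finset -/
def ACF (A : Finset V) : Prop := ∀ x ∈ A, ∀ y ∈ A, x ≠ y → ¬ x ≤ y

/-- chain as a Finset -/
def ChainF (C : Finset V) : Prop := ∀ x ∈ C, ∀ y ∈ C, x ≠ y → x ≤ y ∨ y ≤ x

noncomputable def hiC (C : Finset V) (y : V) : ℤ :=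
  ((C.filter (fun c => c ≤ y)).card : ℤ)

noncomputable def loC (C : Finset V) (y : V) : ℤ :=
  -(((C.filter (fun c => y ≤ c)).card : ℤ))

lemma hiC_mono (C : Finset V) : Monotone (hiC C) := by
  intro u v huv
  have : (C.filter (fun c => c ≤ u)) ⊆ (C.filter (fun c => c ≤ v)) := by
    intro x hx
    simp only [mem_filter] at *
    exact ⟨hx.1, le_trans hx.2 huv⟩
  simpa [hiC] using (Nat.cast_le (α := ℤ)).mpr (card_le_card this)

lemma loC_mono (C : Finset V) : Monotone (loC C) := by
  intro u v huv
  have : (C.filter (fun c => v ≤ c)) ⊆ (C.filter (fun c => u ≤ c)) := by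
    intro x hx
    simp only [mem_filter] at *
    exact ⟨hx.1, le_trans huv hx.2⟩
  simp only [loC]
  exact neg_le_neg (Nat.cast_le.mpr (card_le_card this))

lemma hiC_lt {C : Finset V} (hC : ChainF C) {c v : V} (hc : c ∈ C) (h : ¬ c ≤ v) :
    hiC C v < hiC C c := by
  have hss : (C.filter (fun x => x ≤ v)) ⊂ (C.filter (fun x => x ≤ c)) := by
    constructor
    · intro x hx
      simp only [mem_filter] at *
      refine ⟨hx.1, ?_⟩
      rcases eq_or_ne x c with rfl | hne
      · exact absurd hx.2 h
      · rcases hC x hx.1 c hc hne with h1 | h1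
        · exact h1
        · exact absurd (le_trans h1 hx.2) h
    · intro hsub
      have : c ∈ C.filter (fun x => x ≤ v) := hsub (by simp [mem_filter, hc])
      simp only [mem_filter] at this
      exact h this.2
  simpa [hiC] using (Nat.cast_lt (α := ℤ)).mpr (card_lt_card hss)

lemma loC_lt {C : Finset V} (hC : ChainF C) {c v : V} (hc : c ∈ C) (h : ¬ v ≤ c) :
    loC C c < loC C v := by
  have hss : (C.filter (fun x => v ≤ x)) ⊂ (C.filter (fun x => c ≤ x)) := by
    constructor
    · intro x hx
      simp only [mem_filter] at *
      refine ⟨hx.1, ?_⟩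
      rcases eq_or_ne x c with rfl | hne
      · exact absurd hx.2 h
      · rcases hC x hx.1 c hc hne with h1 | h1
        · exact absurd (le_trans hx.2 h1) h
        · exact h1
    · intro hsub
      have : c ∈ C.filter (fun x => v ≤ x) := hsub (by simp [mem_filter, hc])
      simp only [mem_filter] at this
      exact h this.2
  simp only [loC]
  exact neg_lt_neg (Nat.cast_lt.mpr (card_lt_card hss))

lemma hiS (x z : V) : hiC {x} z = if x ≤ z then 1 else 0 := by
  simp only [hiC, filter_singleton]
  split <;> simp

lemma loS (y z : V) : loC {y} z = if z ≤ y then -1 else 0 := by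
  simp only [loC, filter_singleton]
  split <;> simp

/-- combined coordinate: x high, y low -/
noncomputable def pairHL (x y : V) (z : V) : ℤ := 2 * hiC {x} z + loC {y} z

lemma pairHL_mono (x y : V) : Monotone (pairHL x y) := by
  intro u v huv
  have h1 := hiC_mono {x} huv
  have h2 := loC_mono {y} huv
  simp only [pairHL]
  omega

lemma pairHL_hi {x v : V} (y : V) (h : ¬ x ≤ v) : pairHL x y v < pairHL x y x := by
  simp only [pairHL, hiS, loS, if_neg h, if_pos (le_refl x)]
  split_ifs <;> omega

lemma pairHL_lo {x y u : V} (hxy : ¬ x ≤ y) (h : ¬ u ≤ y) :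
    pairHL x y y < pairHL x y u := by
  simp only [pairHL, hiS, loS, if_neg hxy, if_pos (le_refl y), if_neg h]
  split_ifs <;> omega

/-- combined coordinate: t high and b high (t the global top, b ≤ t) -/
noncomputable def loneC (t b : V) (z : V) : ℤ := 2 * hiC {t} z + hiC {b} z

lemma loneC_mono (t b : V) : Monotone (loneC t b) := by
  intro u v huv
  have h1 := hiC_mono {t} huv
  have h2 := hiC_mono {b} huv
  simp only [loneC]
  omega

lemma loneC_t {t b v : V} (htop : ∀ z, z ≤ t) (h : ¬ t ≤ v) :
    loneC t b v < loneC t b t := by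
  simp only [loneC, hiS, if_neg h, if_pos (le_refl t)]
  split_ifs <;> omega

lemma loneC_b {t b v : V} (htop : ∀ z, z ≤ t) (hbt : b ≠ t) (h : ¬ b ≤ v) :
    loneC t b v < loneC t b b := by
  have h1 : ¬ t ≤ b := fun hh => hbt (le_antisymm (htop b) hh)
  have h2 : ¬ t ≤ v := fun hh => h (le_antisymm (htop v) hh ▸ htop b)
  simp only [loneC, hiS, if_neg h1, if_neg h2, if_neg h, if_pos (le_refl b)]
  omega




/-- the antichain coordinate induced by a ranking -/
noncomputable def pC (A : Finset V) (rk : V → ℕ) (y : V) : ℤ :=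
  (((A.filter (fun a => a ≤ y)).sup rk : ℕ) : ℤ)

lemma pC_mono (A : Finset V) (rk : V → ℕ) : Monotone (pC A rk) := by
  intro u v huv
  apply Nat.cast_le.mpr
  apply Finset.sup_le
  intro a ha
  simp only [mem_filter] at ha
  exact Finset.le_sup (by simp [mem_filter, ha.1, le_trans ha.2 huv])

lemma pC_self {A : Finset V} (hA : ACF A) (rk : V → ℕ) {a : V} (ha : a ∈ A) :
    pC A rk a = rk a := by
  have : A.filter (fun x => x ≤ a) = {a} := by
    ext x
    simp only [mem_filter, mem_singleton]
    constructor
    · rintro ⟨hx, hxa⟩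
      by_contra hne
      exact hA x hx a ha hne hxa
    · rintro rfl; exact ⟨ha, le_refl _⟩
  simp [pC, this]

lemma pC_bot (A : Finset V) (rk : V → ℕ) {y : V} (h : ∀ a ∈ A, ¬ a ≤ y) :
    pC A rk y = 0 := by
  have : A.filter (fun a => a ≤ y) = ∅ := by
    apply filter_eq_empty_iff.mpr
    intro a ha; exact h a ha
  simp [pC, this]

lemma pC_top {A : Finset V} {rk : V → ℕ} {k : ℕ}
    (himg : A.image rk = Finset.Icc 1 k) {y : V} (h : ∀ a ∈ A, a ≤ y) :
    pC A rk y = (k : ℤ) := by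
  have hfil : A.filter (fun a => a ≤ y) = A := filter_true_of_mem h
  simp only [pC, hfil]
  congr 1
  rcases Nat.eq_zero_or_pos k with hk | hk
  · subst hk
    have : A = ∅ := by
      by_contra hne
      obtain ⟨a, ha⟩ := nonempty_iff_ne_empty.mpr hne
      have : rk a ∈ A.image rk := mem_image_of_mem rk ha
      rw [himg] at this
      simp at this
    simp [this]
  · apply le_antisymm
    · apply Finset.sup_le
      intro a ha
      have : rk a ∈ A.image rk := mem_image_of_mem rk ha
      rw [himg, mem_Icc] at this
      exact this.2
    · have : k ∈ A.image rk := by rw [himg, mem_Icc]; omega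
      obtain ⟨a, ha, hrk⟩ := mem_image.mp this
      exact hrk ▸ Finset.le_sup ha

lemma pC_lt_of_ranks {A : Finset V} {rk : V → ℕ} {y : V} {m : ℕ} (hm : 0 < m)
    (h : ∀ d ∈ A, d ≤ y → rk d < m) : pC A rk y < (m : ℤ) := by
  apply Nat.cast_lt.mpr
  apply (Finset.sup_lt_iff (by exact hm : (⊥:ℕ) < m)).mpr
  intro a ha
  simp only [mem_filter] at ha
  exact h a ha.1 ha.2

/-- ranks are bounded and injective -/
lemma rk_mem_Icc {A : Finset V} {rk : V → ℕ} {k : ℕ}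
    (himg : A.image rk = Finset.Icc 1 k) {a : V} (ha : a ∈ A) :
    1 ≤ rk a ∧ rk a ≤ k := by
  have : rk a ∈ A.image rk := mem_image_of_mem rk ha
  rw [himg, mem_Icc] at this
  exact this

lemma rk_injOn {A : Finset V} {rk : V → ℕ} {k : ℕ} (hk : A.card = k)
    (himg : A.image rk = Finset.Icc 1 k) :
    ∀ a ∈ A, ∀ b ∈ A, rk a = rk b → a = b := by
  have hcard : (A.image rk).card = A.card := by
    rw [himg, Nat.card_Icc, hk]; omega
  have := Finset.card_image_iff.mp hcard
  intro a ha b hb hab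
  exact this (by exact ha) (by exact hb) hab

/-- existence of a ranking of an arbitrary finset -/
lemma exists_rank (A : Finset V) : ∃ rk : V → ℕ, A.image rk = Finset.Icc 1 A.card := by
  classical
  refine ⟨fun x => A.toList.idxOf x + 1, ?_⟩
  apply Finset.eq_of_subset_of_card_le
  · intro n hn
    obtain ⟨a, ha, hrk⟩ := mem_image.mp hn
    have hmem : a ∈ A.toList := mem_toList.mpr ha
    have := List.idxOf_lt_length_iff.mpr hmem
    rw [A.length_toList] at this
    rw [mem_Icc]; omega
  · rw [Nat.card_Icc]
    have : (A.image fun x => A.toList.idxOf x + 1).card = A.card := by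
      apply Finset.card_image_of_injOn
      intro a ha b hb hab
      simp only at hab
      have ha' : a ∈ A.toList := mem_toList.mpr ha
      have hb' : b ∈ A.toList := mem_toList.mpr hb
      exact (List.idxOf_inj ha').mp (by omega)
    omega

/-- existence of a ranking putting the down-set of b first -/
lemma exists_rank_down (A : Finset V) (b : V) :
    ∃ rk : V → ℕ, A.image rk = Finset.Icc 1 A.card ∧
      ∀ d ∈ A, d ≤ b → ∀ a ∈ A, ¬ a ≤ b → rk d < rk a := by
  classical
  set A1 := A.filter (fun x => x ≤ b) with hA1
  set A2 := A.filter (fun x => ¬ x ≤ b) with hA2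
  obtain ⟨rk1, h1⟩ := exists_rank A1
  obtain ⟨rk2, h2⟩ := exists_rank A2
  set d0 := A1.card with hd0
  refine ⟨fun x => if x ≤ b then rk1 x else d0 + rk2 x, ?_, ?_⟩
  · have hsplit : A1 ∪ A2 = A := filter_union_filter_not_eq _ A
    have hcards : d0 + A2.card = A.card := by
      rw [hd0]; exact card_filter_add_card_filter_not (s := A) (p := fun x => x ≤ b)
    have himg1 : A1.image (fun x => if x ≤ b then rk1 x else d0 + rk2 x) = Finset.Icc 1 d0 := by
      rw [← h1]
      apply image_congr
      intro x hx
      rw [hA1, mem_coe, mem_filter] at hx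
      simp [hx.2]
    have himg2 : A2.image (fun x => if x ≤ b then rk1 x else d0 + rk2 x)
        = Finset.Icc (d0 + 1) (d0 + A2.card) := by
      have : A2.image (fun x => if x ≤ b then rk1 x else d0 + rk2 x)
          = (A2.image rk2).image (fun n => d0 + n) := by
        rw [image_image]
        apply image_congr
        intro x hx
        rw [hA2, mem_coe, mem_filter] at hx
        simp [hx.2]
      rw [this, h2]
      ext n
      simp only [mem_image, mem_Icc]
      constructor
      · rintro ⟨m, hm, rfl⟩; omega
      · intro hn; exact ⟨n - d0, by omega, by omega⟩
    calc A.image _ = (A1 ∪ A2).image _ := by rw [hsplit]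
      _ = _ ∪ _ := image_union _ _
      _ = Finset.Icc 1 A.card := by
          rw [himg1, himg2]
          ext n
          simp only [mem_union, mem_Icc]
          omega
  · intro d hd hdb a ha hab
    have h1d : rk1 d ≤ d0 := by
      have : rk1 d ∈ A1.image rk1 := mem_image_of_mem _ (by rw [hA1, mem_filter]; exact ⟨hd, hdb⟩)
      rw [h1, mem_Icc] at this; exact this.2
    simp only [if_pos hdb, if_neg hab]
    have : 1 ≤ rk2 a := by
      have : rk2 a ∈ A2.image rk2 := mem_image_of_mem _ (by rw [hA2, mem_filter]; exact ⟨ha, hab⟩)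
      rw [h2, mem_Icc] at this; exact this.1
    omega




noncomputable def widthF (S : Finset V) : ℕ := (S.powerset.filter ACF).sup Finset.card

lemma ACF_empty : ACF (∅ : Finset V) := by intro x hx; simp at hx

lemma ACF_subset {A B : Finset V} (hA : ACF A) (h : B ⊆ A) : ACF B :=
  fun x hx y hy hne => hA x (h hx) y (h hy) hne

lemma ACF_card_le_width {A S : Finset V} (hA : ACF A) (hAS : A ⊆ S) :
    A.card ≤ widthF S :=
  Finset.le_sup (by simp only [mem_filter, mem_powerset]; exact ⟨hAS, hA⟩)

lemma exists_width_antichain (S : Finset V) :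
    ∃ A, A ⊆ S ∧ ACF A ∧ A.card = widthF S := by
  have hne : (S.powerset.filter ACF).Nonempty :=
    ⟨∅, by simp only [mem_filter, mem_powerset]; exact ⟨empty_subset _, ACF_empty⟩⟩
  obtain ⟨A, hA, hcard⟩ := Finset.exists_mem_eq_sup _ hne Finset.card
  simp only [mem_filter, mem_powerset] at hA
  exact ⟨A, hA.1, hA.2, hcard.symm⟩

lemma width_mono {S T : Finset V} (h : S ⊆ T) : widthF S ≤ widthF T := by
  obtain ⟨A, hAS, hA, hc⟩ := exists_width_antichain S
  rw [← hc]
  exact ACF_card_le_width hA (hAS.trans h)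

/-- Dilworth's theorem, by Galvin's induction. -/
theorem dilworth (S : Finset V) : ∃ 𝒞 : Finset (Finset V),
    (∀ C ∈ 𝒞, C.Nonempty ∧ ChainF C ∧ C ⊆ S) ∧
    (∀ x ∈ S, ∃ C ∈ 𝒞, x ∈ C) ∧
    ((𝒞 : Set (Finset V)).PairwiseDisjoint id) ∧
    𝒞.card ≤ widthF S := by
  induction S using Finset.strongInduction with
  | _ S IH =>
  rcases S.eq_empty_or_nonempty with rfl | hSne
  · exact ⟨∅, by simp, by simp, by simp, by simp⟩
  have : Nonempty V := ⟨hSne.choose⟩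
  obtain ⟨m, hmS, hmax'⟩ :=
    Set.Finite.exists_maximalFor id _ (S : Set V).toFinite (coe_nonempty.mpr hSne)
  simp only [id_eq, mem_coe] at hmS hmax'
  have hmax : ∀ x ∈ S, m ≤ x → m = x := fun x hx h => le_antisymm h (hmax' hx h)
  set S' := S.erase m with hS'
  have hsub : S' ⊂ S := erase_ssubset hmS
  have hS'S : S' ⊆ S := erase_subset _ _
  obtain ⟨𝒞, h𝒞chains, h𝒞cover, h𝒞disj, h𝒞card⟩ := IH S' hsub
  set a := widthF S with ha
  by_cases hcase : widthF S' < widthF S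
  · -- the width dropped: add the singleton chain {m}
    refine ⟨insert {m} 𝒞, ?_, ?_, ?_, ?_⟩
    · intro C hC
      rcases mem_insert.mp hC with rfl | hC'
      · exact ⟨⟨m, mem_singleton_self m⟩, fun x hx y hy hne => by
          simp only [mem_singleton] at hx hy; subst hx; subst hy; exact absurd rfl hne,
          by simp [hmS]⟩
      · obtain ⟨h1, h2, h3⟩ := h𝒞chains C hC'
        exact ⟨h1, h2, h3.trans hS'S⟩
    · intro x hx
      rcases eq_or_ne x m with rfl | hne
      · exact ⟨{x}, mem_insert_self _ _, mem_singleton_self x⟩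
      · obtain ⟨C, hC, hxC⟩ := h𝒞cover x (mem_erase.mpr ⟨hne, hx⟩)
        exact ⟨C, mem_insert_of_mem hC, hxC⟩
    · rw [coe_insert]
      apply Set.PairwiseDisjoint.insert h𝒞disj
      intro C hC hne
      simp only [id_eq]
      rw [Finset.disjoint_singleton_left]
      intro hmC
      have := (h𝒞chains C hC).2.2 hmC
      exact (notMem_erase m S) this
    · calc (insert {m} 𝒞).card ≤ 𝒞.card + 1 := card_insert_le _ _
        _ ≤ widthF S' + 1 := by omega
        _ ≤ a := by omega
  · -- width unchanged
    have haeq : widthF S' = a := le_antisymm (width_mono hS'S) (not_lt.mp hcase)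
    obtain ⟨T, hTsub, hTac, hTcard⟩ := exists_width_antichain S'
    rw [haeq] at hTcard
    -- any maximum antichain of S' meets every chain of 𝒞
    have hinjgen : ∀ T' : Finset V, ACF T' →
        ∀ ψ : V → Finset V, (∀ x ∈ T', x ∈ ψ x) → (∀ x ∈ T', ψ x ∈ 𝒞) →
        ∀ x ∈ T', ∀ y ∈ T', ψ x = ψ y → x = y := by
      intro T' hT' ψ hψ2 hψ1 x hx y hy hxy
      by_contra hne
      have hyx : y ∈ ψ x := hxy ▸ hψ2 y hy
      rcases (h𝒞chains _ (hψ1 x hx)).2.1 x (hψ2 x hx) y hyx hne with h | h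
      · exact hT' x hx y hy hne h
      · exact hT' y hy x hx (Ne.symm hne) h
    have h𝒞a : 𝒞.card = a := by
      have hφ : ∀ x ∈ T, ∃ C, C ∈ 𝒞 ∧ x ∈ C := fun x hx => h𝒞cover x (hTsub hx)
      choose! φ hφ1 hφ2 using hφ
      have hle : T.card ≤ 𝒞.card := by
        apply card_le_card_of_injOn φ (fun x hx => hφ1 x hx)
        intro x hx y hy hxy
        exact hinjgen T hTac φ hφ2 hφ1 x hx y hy hxy
      omega
    have hmeet : ∀ T' : Finset V, T' ⊆ S' → ACF T' → T'.card = a →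
        ∀ C ∈ 𝒞, ∃ x ∈ T', x ∈ C := by
      intro T' hT'sub hT' hT'card C hC
      have hφ : ∀ x ∈ T', ∃ C, C ∈ 𝒞 ∧ x ∈ C := fun x hx => h𝒞cover x (hT'sub hx)
      choose! ψ hψ1 hψ2 using hφ
      have := Finset.surj_on_of_inj_on_of_card_le (s := T') (t := 𝒞)
        (fun x _ => ψ x) (fun x hx => hψ1 x hx)
        (fun x y hx hy h => hinjgen T' hT' ψ hψ2 hψ1 x hx y hy h)
        (by omega)
      obtain ⟨x, hx, hxeq⟩ := this C hC
      exact ⟨x, hx, hxeq ▸ hψ2 x hx⟩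
    -- pick the top witness element of each chain
    have hgex : ∀ C ∈ 𝒞, ∃ z, z ∈ C ∧
        (∃ T', T' ⊆ S' ∧ ACF T' ∧ T'.card = a ∧ z ∈ T') ∧
        ∀ x ∈ C, (∃ T', T' ⊆ S' ∧ ACF T' ∧ T'.card = a ∧ x ∈ T') → x ≤ z := by
      intro C hC
      set M := C.filter (fun x => ∃ T', T' ⊆ S' ∧ ACF T' ∧ T'.card = a ∧ x ∈ T') with hM
      have hMne : M.Nonempty := by
        obtain ⟨x, hxT, hxC⟩ := hmeet T hTsub hTac hTcard C hC
        exact ⟨x, mem_filter.mpr ⟨hxC, ⟨T, hTsub, hTac, hTcard, hxT⟩⟩⟩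
      obtain ⟨z, hzM, hzmax⟩ :=
        Set.Finite.exists_maximalFor id _ (M : Set V).toFinite (coe_nonempty.mpr hMne)
      simp only [id_eq, mem_coe] at hzM hzmax
      refine ⟨z, (mem_filter.mp hzM).1, (mem_filter.mp hzM).2, ?_⟩
      intro x hxC hxW
      have hxM : x ∈ M := mem_filter.mpr ⟨hxC, hxW⟩
      rcases eq_or_ne x z with rfl | hne
      · exact le_refl _
      · rcases (h𝒞chains C hC).2.1 x hxC z (mem_filter.mp hzM).1 hne with h | h
        · exact h
        · exact hzmax hxM h
    choose! g hg1 hg2 hg3 using hgex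
    set Astar := 𝒞.image g with hAstar
    have hAsub : ∀ y ∈ Astar, y ∈ S' := by
      intro y hy
      obtain ⟨C, hC, rfl⟩ := mem_image.mp hy
      exact (h𝒞chains C hC).2.2 (hg1 C hC)
    have hAstarcard : Astar.card = 𝒞.card := by
      apply card_image_of_injOn
      intro C hC C' hC' heq
      simp only [mem_coe] at hC hC'
      by_contra hne
      have hd := h𝒞disj (mem_coe.mpr hC) (mem_coe.mpr hC') hne
      exact Finset.disjoint_left.mp hd (hg1 C hC) (heq ▸ hg1 C' hC')
    have hAstarACF : ACF Astar := by
      intro x hx y hy hne hxy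
      obtain ⟨C, hC, rfl⟩ := mem_image.mp hx
      obtain ⟨C', hC', rfl⟩ := mem_image.mp hy
      obtain ⟨T', hT'sub, hT'ac, hT'card, hmemT'⟩ := hg2 C' hC'
      obtain ⟨zz, hzzT', hzzC⟩ := hmeet T' hT'sub hT'ac hT'card C hC
      have hzzle : zz ≤ g C := hg3 C hC zz hzzC ⟨T', hT'sub, hT'ac, hT'card, hzzT'⟩
      have hzz2 : zz ≤ g C' := le_trans hzzle hxy
      rcases eq_or_ne zz (g C') with heq | hne2
      · rw [heq] at hzzle
        exact hne (le_antisymm hxy hzzle)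
      · exact hT'ac zz hzzT' (g C') hmemT' hne2 hzz2
    have hex : ∃ C ∈ 𝒞, g C ≤ m := by
      by_contra hno
      push_neg at hno
      have hmnot : m ∉ Astar := fun hm => (notMem_erase m S) (hAsub m hm)
      have hins : ACF (insert m Astar) := by
        intro x hx y hy hne hxy
        rcases mem_insert.mp hx with hxm | hx' <;> rcases mem_insert.mp hy with hym | hy'
        · exact absurd (hxm.trans hym.symm) hne
        · have hyS : y ∈ S := hS'S (hAsub y hy')
          have hmy := hmax y hyS (hxm ▸ hxy)
          exact absurd (hAsub y hy') (by rw [← hmy]; exact notMem_erase m S)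
        · obtain ⟨C, hC, rfl⟩ := mem_image.mp hx'
          exact hno C hC (hym ▸ hxy)
        · exact hAstarACF x hx' y hy' hne hxy
      have hcard := ACF_card_le_width hins (by
        intro x hx
        rcases mem_insert.mp hx with rfl | hx'
        · exact hmS
        · exact hS'S (hAsub x hx'))
      rw [card_insert_of_notMem hmnot, hAstarcard, h𝒞a] at hcard
      omega
    obtain ⟨C0, hC0, hgm⟩ := hex
    set z0 := g C0 with hz0
    set Cx := insert m (C0.filter (fun x => x ≤ z0)) with hCx
    have hmCx : m ∈ Cx := mem_insert_self _ _
    set S2 := S \ Cx with hS2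
    have hS2ss : S2 ⊂ S := by
      rw [ssubset_iff_of_subset (sdiff_subset)]
      exact ⟨m, hmS, fun h => (mem_sdiff.mp h).2 hmCx⟩
    have hS2S' : S2 ⊆ S' := by
      intro x hx
      rw [mem_sdiff] at hx
      exact mem_erase.mpr ⟨fun h => hx.2 (h ▸ hmCx), hx.1⟩
    have hw2 : widthF S2 < a := by
      by_contra hge
      push_neg at hge
      obtain ⟨T2, hT2sub, hT2ac, hT2card⟩ := exists_width_antichain S2
      obtain ⟨T3, hT3sub, hT3card⟩ := exists_subset_card_eq (s := T2) (n := a) (by omega)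
      have hT3ac := ACF_subset hT2ac hT3sub
      have hT3S2 : T3 ⊆ S2 := hT3sub.trans hT2sub
      obtain ⟨x, hxT3, hxC0⟩ := hmeet T3 (hT3S2.trans hS2S') hT3ac hT3card C0 hC0
      have hxle : x ≤ z0 := hg3 C0 hC0 x hxC0 ⟨T3, hT3S2.trans hS2S', hT3ac, hT3card, hxT3⟩
      have hxCx : x ∈ Cx := mem_insert_of_mem (mem_filter.mpr ⟨hxC0, hxle⟩)
      exact (mem_sdiff.mp (hT3S2 hxT3)).2 hxCx
    obtain ⟨𝒞2, h2chains, h2cover, h2disj, h2card⟩ := IH S2 hS2ss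
    have hCxchain : ChainF Cx := by
      intro x hx y hy hne
      have hzm : z0 ≤ m := hgm
      rcases mem_insert.mp hx with rfl | hx' <;> rcases mem_insert.mp hy with rfl | hy'
      · exact absurd rfl hne
      · exact Or.inr (le_trans (mem_filter.mp hy').2 hzm)
      · exact Or.inl (le_trans (mem_filter.mp hx').2 hzm)
      · exact (h𝒞chains C0 hC0).2.1 x (mem_filter.mp hx').1 y (mem_filter.mp hy').1 hne
    have hCxsub : Cx ⊆ S := by
      intro x hx
      rcases mem_insert.mp hx with rfl | hx'
      · exact hmS
      · exact hS'S ((h𝒞chains C0 hC0).2.2 (mem_filter.mp hx').1)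
    refine ⟨insert Cx 𝒞2, ?_, ?_, ?_, ?_⟩
    · intro C hC
      rcases mem_insert.mp hC with rfl | hC'
      · exact ⟨⟨m, hmCx⟩, hCxchain, hCxsub⟩
      · obtain ⟨h1, h2, h3⟩ := h2chains C hC'
        exact ⟨h1, h2, h3.trans sdiff_subset⟩
    · intro x hx
      by_cases hxCx : x ∈ Cx
      · exact ⟨Cx, mem_insert_self _ _, hxCx⟩
      · obtain ⟨C, hC, hxC⟩ := h2cover x (mem_sdiff.mpr ⟨hx, hxCx⟩)
        exact ⟨C, mem_insert_of_mem hC, hxC⟩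
    · rw [coe_insert]
      apply Set.PairwiseDisjoint.insert h2disj
      intro C hC hne
      simp only [id_eq]
      rw [Finset.disjoint_left]
      intro x hxCx hxC
      have := (h2chains C hC).2.2 hxC
      exact (mem_sdiff.mp this).2 hxCx
    · calc (insert Cx 𝒞2).card ≤ 𝒞2.card + 1 := card_insert_le _ _
        _ ≤ widthF S2 + 1 := by omega
        _ ≤ a := by omega




def CoverProp (B : Finset V) (𝒞 : Finset (Finset V)) : Prop :=
  (∀ C ∈ 𝒞, C.Nonempty ∧ ChainF C ∧ C ⊆ B) ∧
  (∀ x ∈ B, ∃ C ∈ 𝒞, x ∈ C) ∧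
  ((𝒞 : Set (Finset V)).PairwiseDisjoint id)

lemma exists_good_cover (B : Finset V) : ∃ 𝒞, CoverProp B 𝒞 ∧
    ∀ C ∈ 𝒞, ∀ C' ∈ 𝒞, C ≠ C' → C.card = 1 → C'.card = 1 →
      ∀ x ∈ C, ∀ y ∈ C', ¬ x ≤ y := by
  set 𝒮 : Finset (Finset (Finset V)) := B.powerset.powerset.filter (CoverProp B) with h𝒮
  have h0 : (B.image (fun b => ({b} : Finset V))) ∈ 𝒮 := by
    rw [h𝒮, mem_filter, mem_powerset]
    refine ⟨?_, ?_, ?_, ?_⟩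
    · intro C hC
      obtain ⟨b, hb, rfl⟩ := mem_image.mp hC
      simp [mem_powerset, singleton_subset_iff, hb]
    · intro C hC
      obtain ⟨b, hb, rfl⟩ := mem_image.mp hC
      exact ⟨singleton_nonempty b, fun x hx y hy hne => by
        simp only [mem_singleton] at hx hy; exact absurd (hx.trans hy.symm) hne,
        singleton_subset_iff.mpr hb⟩
    · intro x hx
      exact ⟨{x}, mem_image_of_mem _ hx, mem_singleton_self x⟩
    · intro C hC C' hC' hne
      simp only [mem_coe, mem_image] at hC hC'
      obtain ⟨b, hb, rfl⟩ := hC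
      obtain ⟨b', hb', rfl⟩ := hC'
      simp only [Function.onFun, id_eq]
      rw [Finset.disjoint_singleton_left, mem_singleton]
      intro h
      exact hne (by rw [h])
  obtain ⟨𝒞, h𝒞mem, h𝒞min⟩ := Finset.exists_min_image 𝒮 Finset.card ⟨_, h0⟩
  rw [h𝒮, mem_filter] at h𝒞mem
  obtain ⟨h𝒞pow, h𝒞cov⟩ := h𝒞mem
  refine ⟨𝒞, h𝒞cov, ?_⟩
  intro C hC C' hC' hne hc1 hc1' x hx y hy hxy
  -- C = {x}, C' = {y}
  obtain ⟨u, hu⟩ := Finset.card_eq_one.mp hc1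
  obtain ⟨u', hu'⟩ := Finset.card_eq_one.mp hc1'
  rw [hu, mem_singleton] at hx
  rw [hu', mem_singleton] at hy
  subst hx; subst hy
  have hCx : C = {x} := hu
  have hC'y : C' = {y} := hu'
  -- merge
  set 𝒞' := insert ({x, y} : Finset V) ((𝒞.erase C).erase C') with h𝒞'
  have hxB : x ∈ B := (h𝒞cov.1 C hC).2.2 (hCx ▸ mem_singleton_self x)
  have hyB : y ∈ B := (h𝒞cov.1 C' hC').2.2 (hC'y ▸ mem_singleton_self y)
  have hxy' : x ≠ y := by
    intro h
    subst h
    exact hne (hCx.trans hC'y.symm)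
  have hcov' : CoverProp B 𝒞' := by
    refine ⟨?_, ?_, ?_⟩
    · intro D hD
      rcases mem_insert.mp hD with rfl | hD'
      · refine ⟨⟨x, by simp⟩, ?_, by simp [insert_subset_iff, hxB, hyB]⟩
        intro a ha b hb hne'
        simp only [mem_insert, mem_singleton] at ha hb
        rcases ha with rfl | rfl <;> rcases hb with rfl | rfl
        · exact absurd rfl hne'
        · exact Or.inl hxy
        · exact Or.inr hxy
        · exact absurd rfl hne'
      · exact h𝒞cov.1 D (mem_of_mem_erase (mem_of_mem_erase hD'))
    · intro b hb
      obtain ⟨D, hD, hbD⟩ := h𝒞cov.2.1 b hb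
      rcases eq_or_ne D C with rfl | hDC
      · rw [hCx, mem_singleton] at hbD
        exact ⟨{x, y}, mem_insert_self _ _, by simp [hbD]⟩
      rcases eq_or_ne D C' with rfl | hDC'
      · rw [hC'y, mem_singleton] at hbD
        exact ⟨{x, y}, mem_insert_self _ _, by simp [hbD]⟩
      · exact ⟨D, mem_insert_of_mem (mem_erase.mpr ⟨hDC', mem_erase.mpr ⟨hDC, hD⟩⟩), hbD⟩
    · rw [h𝒞', coe_insert]
      apply Set.PairwiseDisjoint.insert
      · exact h𝒞cov.2.2.subset (by
          intro D hD
          simp only [mem_coe] at *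
          exact mem_of_mem_erase (mem_of_mem_erase hD))
      · intro D hD hne'
        simp only [mem_coe, mem_erase] at hD
        obtain ⟨hDC', hDC, hD𝒞⟩ := hD
        simp only [id_eq]
        rw [Finset.disjoint_left]
        intro z hz hzD
        simp only [mem_insert, mem_singleton] at hz
        rcases hz with rfl | rfl
        · have hdisj := h𝒞cov.2.2 (mem_coe.mpr hC) (mem_coe.mpr hD𝒞) (Ne.symm hDC)
          exact Finset.disjoint_left.mp hdisj (hCx ▸ mem_singleton_self z) hzD
        · have hdisj := h𝒞cov.2.2 (mem_coe.mpr hC') (mem_coe.mpr hD𝒞) (Ne.symm hDC')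
          exact Finset.disjoint_left.mp hdisj (hC'y ▸ mem_singleton_self z) hzD
  have h𝒞'mem : 𝒞' ∈ 𝒮 := by
    rw [h𝒮, mem_filter, mem_powerset]
    refine ⟨?_, hcov'⟩
    intro D hD
    rw [mem_powerset]
    exact (hcov'.1 D hD).2.2
  have hlt : 𝒞'.card < 𝒞.card := by
    have h2 : 2 ≤ 𝒞.card := Finset.one_lt_card.mpr ⟨C, hC, C', hC', hne⟩
    have hC'mem : C' ∈ 𝒞.erase C := mem_erase.mpr ⟨Ne.symm hne, hC'⟩
    have hcarderase : ((𝒞.erase C).erase C').card = 𝒞.card - 2 := by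
      rw [card_erase_of_mem hC'mem, card_erase_of_mem hC]
      omega
    calc 𝒞'.card ≤ ((𝒞.erase C).erase C').card + 1 := card_insert_le _ _
      _ = 𝒞.card - 2 + 1 := by rw [hcarderase]
      _ < 𝒞.card := by omega
  exact absurd (h𝒞min 𝒞' h𝒞'mem) (by omega)



lemma corank_img {A : Finset V} {rk : V → ℕ} {k : ℕ}
    (himg : A.image rk = Finset.Icc 1 k) :
    A.image (fun x => k + 1 - rk x) = Finset.Icc 1 k := by
  have : A.image (fun x => k + 1 - rk x) = (A.image rk).image (fun n => k + 1 - n) := by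
    rw [Finset.image_image]; rfl
  rw [this, himg]
  ext n
  simp only [Finset.mem_image, Finset.mem_Icc]
  constructor
  · rintro ⟨m, hm, rfl⟩; omega
  · intro hn; exact ⟨k + 1 - n, by omega, by omega⟩

lemma resolve_master {A B : Finset V} {s t : V} {rk : V → ℕ} {k : ℕ} {L : List (V → ℤ)}
    (hA : ACF A) (hk : 2 ≤ k) (hkA : A.card = k)
    (hs : ∀ v, s ≤ v) (ht : ∀ v, v ≤ t)
    (himg : A.image rk = Finset.Icc 1 k)
    (hP : pC A rk ∈ L) (hQ : pC A (fun x => k + 1 - rk x) ∈ L)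
    (hBuniv : ∀ u : V, u ∉ A → u ≠ s → u ≠ t → u ∈ B)
    (hsA : s ∉ A) (htA : t ∉ A)
    (c1 : ∀ b ∈ B, ∀ v, ¬ b ≤ v → ∃ f ∈ L, f v < f b)
    (c2 : ∀ b ∈ B, ∀ u, ¬ u ≤ b → (u ∈ A ∨ u = t) → ∃ f ∈ L, f b < f u) :
    ∀ u v, ¬ u ≤ v → ∃ f ∈ L, f v < f u := by
  have himg' := corank_img himg
  set crk := fun x => k + 1 - rk x with hcrk
  have hsbot : ∀ a ∈ A, ¬ a ≤ s := by
    intro a ha h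
    exact hsA ((le_antisymm h (hs a)) ▸ ha)
  have hps : pC A rk s = 0 := pC_bot A rk hsbot
  have hqs : pC A crk s = 0 := pC_bot A crk hsbot
  have hpt : pC A rk t = (k : ℤ) := pC_top himg (fun a _ => ht a)
  have hqt : pC A crk t = (k : ℤ) := pC_top himg' (fun a _ => ht a)
  intro u v huv
  by_cases huB : u ∈ B
  · exact c1 u huB v huv
  rcases eq_or_ne u s with rfl | hus
  · exact absurd (hs v) huv
  have hvt' : ∀ w, ¬ u ≤ w → w ≠ t := by
    intro w hw hwt
    exact hw (hwt.symm ▸ ht u)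
  have hvt : v ≠ t := hvt' v huv
  rcases eq_or_ne u t with hut | hut
  -- u = t
  · by_cases hvB : v ∈ B
    · exact c2 v hvB u huv (Or.inr hut)
    rcases eq_or_ne v s with rfl | hvs
    · exact ⟨pC A rk, hP, by rw [hps, hut, hpt]; exact_mod_cast (show 0 < k by omega)⟩
    have hvA : v ∈ A := by
      by_contra hvA
      exact hvB (hBuniv v hvA hvs hvt)
    have h1 := rk_mem_Icc himg hvA
    rcases lt_or_eq_of_le h1.2 with hlt | heq
    · refine ⟨pC A rk, hP, ?_⟩
      rw [hut, hpt, pC_self hA rk hvA]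
      exact_mod_cast hlt
    · refine ⟨pC A crk, hQ, ?_⟩
      rw [hut, hqt, pC_self hA crk hvA]
      have : crk v = 1 := by simp only [hcrk]; omega
      rw [this]
      exact_mod_cast (show 1 < k by omega)
  -- u ∈ A
  · have huA : u ∈ A := by
      by_contra huA
      exact huB (hBuniv u huA hus hut)
    by_cases hvB : v ∈ B
    · exact c2 v hvB u huv (Or.inl huA)
    rcases eq_or_ne v s with rfl | hvs
    · refine ⟨pC A rk, hP, ?_⟩
      rw [hps, pC_self hA rk huA]
      have h1 := rk_mem_Icc himg huA
      exact_mod_cast (show 0 < rk u by omega)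
    have hvA : v ∈ A := by
      by_contra hvA
      exact hvB (hBuniv v hvA hvs hvt)
    have hne : u ≠ v := by rintro rfl; exact huv (le_refl u)
    have hrkne : rk u ≠ rk v := by
      intro h
      exact hne (rk_injOn hkA himg u huA v hvA h)
    have hu1 := rk_mem_Icc himg huA
    have hv1 := rk_mem_Icc himg hvA
    rcases lt_or_gt_of_ne hrkne with hlt | hgt
    · refine ⟨pC A crk, hQ, ?_⟩
      rw [pC_self hA crk huA, pC_self hA crk hvA]
      simp only [hcrk]
      exact_mod_cast (show k + 1 - rk v < k + 1 - rk u by omega)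
    · refine ⟨pC A rk, hP, ?_⟩
      rw [pC_self hA rk huA, pC_self hA rk hvA]
      exact_mod_cast hgt


lemma hard_case [Fintype V] (s t : V) (hs : ∀ v, s ≤ v) (ht : ∀ v, v ≤ t)
    (A : Finset V) (hA : ACF A) (hk2 : 2 ≤ A.card) :
    ∃ L : List (V → ℤ), L.length + A.card ≤ Fintype.card V ∧
      (∀ f ∈ L, Monotone f) ∧ (∀ u v : V, ¬ u ≤ v → ∃ f ∈ L, f v < f u) := by
  classical
  set k := A.card with hk
  have hsA : s ∉ A := by
    intro hsmem
    obtain ⟨a, ha, hane⟩ := Finset.exists_mem_ne hk2 s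
    exact hA s hsmem a ha (Ne.symm hane) (hs a)
  have htA : t ∉ A := by
    intro htmem
    obtain ⟨a, ha, hane⟩ := Finset.exists_mem_ne hk2 t
    exact hA a ha t htmem hane (ht a)
  have hst : s ≠ t := by
    obtain ⟨a, ha, b, hb, hab⟩ := Finset.one_lt_card.mp hk2
    intro h
    exact hA a ha b hb hab (le_trans (ht a) (h ▸ hs b))
  set B := Finset.univ \ (A ∪ {s, t}) with hB
  have hBuniv : ∀ u : V, u ∉ A → u ≠ s → u ≠ t → u ∈ B := by
    intro u h1 h2 h3
    rw [hB, mem_sdiff, mem_union, mem_insert, mem_singleton]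
    exact ⟨mem_univ u, by tauto⟩
  have hBA : ∀ b ∈ B, b ∉ A ∧ b ≠ s ∧ b ≠ t := by
    intro b hb
    rw [hB, mem_sdiff, mem_union, mem_insert, mem_singleton] at hb
    tauto
  have hcardB : B.card + k + 2 = Fintype.card V := by
    have hdisj : Disjoint A ({s, t} : Finset V) := by
      rw [Finset.disjoint_right]
      intro x hx
      rw [mem_insert, mem_singleton] at hx
      rcases hx with rfl | rfl
      · exact hsA
      · exact htA
    have hcu : (A ∪ {s, t}).card = k + 2 := by
      rw [card_union_of_disjoint hdisj, card_insert_of_notMem (by simp [hst]), card_singleton]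
    have hle : (A ∪ ({s, t} : Finset V)).card ≤ Fintype.card V := by
      rw [← Finset.card_univ]; exact card_le_card (subset_univ _)
    rw [hB, card_sdiff_of_subset (subset_univ _), Finset.card_univ, hcu]
    omega
  obtain ⟨𝒞, ⟨hch, hcov, hdisj⟩, hsingles⟩ := exists_good_cover B
  have hsum : ∑ C ∈ 𝒞, C.card = B.card := by
    have hBeq : B = 𝒞.biUnion id := by
      apply Finset.Subset.antisymm
      · intro x hx
        obtain ⟨C, hC, hxC⟩ := hcov x hx
        exact mem_biUnion.mpr ⟨C, hC, hxC⟩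
      · intro x hx
        obtain ⟨C, hC, hxC⟩ := mem_biUnion.mp hx
        exact (hch C hC).2.2 hxC
    have hdisj' : ∀ C ∈ 𝒞, ∀ C' ∈ 𝒞, C ≠ C' → Disjoint (id C) (id C') :=
      fun C hC C' hC' hne => hdisj (mem_coe.mpr hC) (mem_coe.mpr hC') hne
    rw [hBeq, card_biUnion hdisj']
    rfl
  set multis := 𝒞.filter (fun C => 2 ≤ C.card) with hmultis
  set singlesF := 𝒞.filter (fun C => ¬ 2 ≤ C.card) with hsinglesF
  have hsing1 : ∀ C ∈ singlesF, C.card = 1 := by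
    intro C hC
    rw [hsinglesF, mem_filter] at hC
    have := Finset.card_pos.mpr (hch C hC.1).1
    omega
  have hcount : 2 * multis.card + singlesF.card ≤ B.card := by
    have hsplit : ∑ C ∈ multis, C.card + ∑ C ∈ singlesF, C.card = ∑ C ∈ 𝒞, C.card := by
      rw [hmultis, hsinglesF]
      exact Finset.sum_filter_add_sum_filter_not 𝒞 _ _
    have h1 : multis.card • 2 ≤ ∑ C ∈ multis, C.card :=
      Finset.card_nsmul_le_sum multis Finset.card 2 (fun C hC => (mem_filter.mp hC).2)
    have h2 : ∑ C ∈ singlesF, C.card = singlesF.card := by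
      rw [Finset.sum_congr rfl hsing1]
      simp
    simp only [smul_eq_mul] at h1
    omega
  set SE := singlesF.biUnion id with hSE
  have hSEmem : ∀ x ∈ SE, ({x} : Finset V) ∈ singlesF ∧ x ∈ B := by
    intro x hx
    obtain ⟨C, hC, hxC⟩ := mem_biUnion.mp hx
    have hC1 := hsing1 C hC
    obtain ⟨y, hy⟩ := card_eq_one.mp hC1
    subst hy
    simp only [id_eq, mem_singleton] at hxC
    subst hxC
    exact ⟨hC, (hch _ (mem_filter.mp hC).1).2.2 (mem_singleton_self x)⟩
  have hSEcard : SE.card = singlesF.card := by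
    rw [hSE, card_biUnion (fun C hC C' hC' hne =>
      hdisj (mem_coe.mpr (mem_filter.mp hC).1) (mem_coe.mpr (mem_filter.mp hC').1) hne)]
    simp only [id_eq]
    rw [Finset.sum_congr rfl (fun C hC => hsing1 C hC)]
    simp
  have hSEinc : ∀ x ∈ SE, ∀ y ∈ SE, x ≠ y → ¬ x ≤ y := by
    intro x hx y hy hne
    have h1 := hSEmem x hx
    have h2 := hSEmem y hy
    have hCC : ({x} : Finset V) ≠ {y} := by simp [hne]
    exact hsingles {x} (mem_filter.mp h1.1).1 {y} (mem_filter.mp h2.1).1 hCC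
      (card_singleton x) (card_singleton y) x (mem_singleton_self x) y (mem_singleton_self y)
  have hSEB : ∀ x ∈ SE, x ∈ B := fun x hx => (hSEmem x hx).2
  have hSEt : ∀ x ∈ SE, x ≠ t := fun x hx => (hBA x (hSEB x hx)).2.2
  -- multi chain facts
  have hmultichain : ∀ C ∈ multis, ChainF C := fun C hC => (hch C (mem_filter.mp hC).1).2.1
  have hmultimem : ∀ b ∈ B, (∃ C ∈ multis, b ∈ C) ∨ b ∈ SE := by
    intro b hb
    obtain ⟨C, hC, hbC⟩ := hcov b hb
    by_cases h2 : 2 ≤ C.card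
    · exact Or.inl ⟨C, mem_filter.mpr ⟨hC, h2⟩, hbC⟩
    · exact Or.inr (mem_biUnion.mpr ⟨C, mem_filter.mpr ⟨hC, h2⟩, hbC⟩)
  set MH : List (V → ℤ) := multis.toList.map hiC with hMH
  set ML : List (V → ℤ) := multis.toList.map loC with hML
  have hMHlen : MH.length = multis.card := by rw [hMH, List.length_map, Finset.length_toList]
  have hMLlen : ML.length = multis.card := by rw [hML, List.length_map, Finset.length_toList]
  have hMHmem : ∀ C ∈ multis, hiC C ∈ MH := by
    intro C hC
    rw [hMH]
    exact List.mem_map.mpr ⟨C, Finset.mem_toList.mpr hC, rfl⟩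
  have hMLmem : ∀ C ∈ multis, loC C ∈ ML := by
    intro C hC
    rw [hML]
    exact List.mem_map.mpr ⟨C, Finset.mem_toList.mpr hC, rfl⟩
  have hMHmono : ∀ f ∈ MH, Monotone f := by
    intro f hf
    obtain ⟨C, _, rfl⟩ := List.mem_map.mp hf
    exact hiC_mono C
  have hMLmono : ∀ f ∈ ML, Monotone f := by
    intro f hf
    obtain ⟨C, _, rfl⟩ := List.mem_map.mp hf
    exact loC_mono C
  -- now case on the number of singleton chains
  by_cases hse2 : 2 ≤ SE.card
  · -- at least two singleton elements: use the cyclic construction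
    set m := SE.card with hm
    haveI : NeZero m := ⟨by omega⟩
    let e : {x // x ∈ SE} ≃ Fin m := Fintype.equivFinOfCardEq (Fintype.card_coe SE)
    set nth : Fin m → V := fun i => (e.symm i : V) with hnth
    have hnthSE : ∀ i, nth i ∈ SE := fun i => (e.symm i).2
    have hnth_inj : ∀ i j : Fin m, i ≠ j → nth i ≠ nth j := by
      intro i j hij h
      exact hij (e.symm.injective (Subtype.ext h))
    have hsucc_ne : ∀ i : Fin m, i ≠ i + 1 := by
      intro i h
      have h' : i + 0 = i + 1 := by simpa using h
      have h0 : (0 : Fin m) = 1 := add_left_cancel h'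
      have h1 := Fin.one_eq_zero_iff.mp h0.symm
      omega
    set SC : List (V → ℤ) := (List.finRange m).map (fun i => pairHL (nth i) (nth (i + 1)))
      with hSC
    have hSClen : SC.length = m := by rw [hSC, List.length_map, List.length_finRange]
    obtain ⟨rk, himg⟩ := exists_rank A
    set L : List (V → ℤ) := MH ++ ML ++ SC ++ [pC A rk, pC A (fun x => k + 1 - rk x)] with hL
    have hP : pC A rk ∈ L := by rw [hL]; simp
    have hQ : pC A (fun x => k + 1 - rk x) ∈ L := by rw [hL]; simp
    have hMHL : ∀ f ∈ MH, f ∈ L := by intro f hf; rw [hL]; simp [hf]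
    have hMLL : ∀ f ∈ ML, f ∈ L := by intro f hf; rw [hL]; simp [hf]
    have hSCL : ∀ f ∈ SC, f ∈ L := by intro f hf; rw [hL]; simp [hf]
    refine ⟨L, ?_, ?_, ?_⟩
    · rw [hL]
      simp only [List.length_append, List.length_cons, List.length_nil, hMHlen, hMLlen, hSClen]
      omega
    · intro f hf
      rw [hL] at hf
      simp only [List.mem_append, List.mem_cons, List.mem_singleton, List.not_mem_nil,
        or_false] at hf
      rcases hf with ((hf | hf) | hf) | hf | hf
      · exact hMHmono f hf
      · exact hMLmono f hf
      · obtain ⟨i, _, rfl⟩ := List.mem_map.mp hf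
        exact pairHL_mono _ _
      · subst hf; exact pC_mono A rk
      · subst hf; exact pC_mono A _
    · apply resolve_master hA (by omega) hk.symm hs ht himg hP hQ hBuniv hsA htA
      · -- c1
        intro b hb v hbv
        rcases hmultimem b hb with ⟨C, hC, hbC⟩ | hbSE
        · exact ⟨hiC C, hMHL _ (hMHmem C hC), hiC_lt (hmultichain C hC) hbC hbv⟩
        · set i := e ⟨b, hbSE⟩ with hi
          have hnthi : nth i = b := by rw [hnth, hi]; simp
          refine ⟨pairHL (nth i) (nth (i + 1)), hSCL _ ?_, ?_⟩
          · exact List.mem_map.mpr ⟨i, List.mem_finRange i, rfl⟩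
          · rw [← hnthi] at hbv ⊢
            exact pairHL_hi _ hbv
      · -- c2
        intro b hb u hub _
        rcases hmultimem b hb with ⟨C, hC, hbC⟩ | hbSE
        · exact ⟨loC C, hMLL _ (hMLmem C hC), loC_lt (hmultichain C hC) hbC hub⟩
        · set i := e ⟨b, hbSE⟩ with hi
          have hnthi : nth i = b := by rw [hnth, hi]; simp
          set j := i - 1 with hj
          have hj1 : j + 1 = i := by rw [hj]; exact sub_add_cancel i 1
          have hjne : j ≠ j + 1 := hsucc_ne j
          have hnthj : nth (j + 1) = b := by rw [hj1, hnthi]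
          have hincomp : ¬ nth j ≤ nth (j + 1) :=
            hSEinc _ (hnthSE j) _ (hnthSE (j + 1)) (hnth_inj _ _ hjne)
          refine ⟨pairHL (nth j) (nth (j + 1)), hSCL _ ?_, ?_⟩
          · exact List.mem_map.mpr ⟨j, List.mem_finRange j, rfl⟩
          · rw [← hnthj] at hub ⊢
            exact pairHL_lo hincomp hub
  · by_cases hse1 : SE.card = 1
    · -- exactly one singleton element
      obtain ⟨b0, hb0⟩ := card_eq_one.mp hse1
      have hb0SE : b0 ∈ SE := hb0 ▸ mem_singleton_self b0
      have hb0B : b0 ∈ B := hSEB b0 hb0SE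
      have hb0t : b0 ≠ t := hSEt b0 hb0SE
      obtain ⟨rk, himg, hdown⟩ := exists_rank_down A b0
      set L : List (V → ℤ) := MH ++ ML ++ [loneC t b0] ++
        [pC A rk, pC A (fun x => k + 1 - rk x)] with hL
      have hP : pC A rk ∈ L := by rw [hL]; simp
      have hQ : pC A (fun x => k + 1 - rk x) ∈ L := by rw [hL]; simp
      have hMHL : ∀ f ∈ MH, f ∈ L := by intro f hf; rw [hL]; simp [hf]
      have hMLL : ∀ f ∈ ML, f ∈ L := by intro f hf; rw [hL]; simp [hf]
      have hloneL : loneC t b0 ∈ L := by rw [hL]; simp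
      refine ⟨L, ?_, ?_, ?_⟩
      · rw [hL]
        simp only [List.length_append, List.length_cons, List.length_nil, hMHlen, hMLlen]
        omega
      · intro f hf
        rw [hL] at hf
        simp only [List.mem_append, List.mem_cons, List.mem_singleton, List.not_mem_nil,
          or_false] at hf
        rcases hf with ((hf | hf) | hf) | hf | hf
        · exact hMHmono f hf
        · exact hMLmono f hf
        · subst hf; exact loneC_mono t b0
        · subst hf; exact pC_mono A rk
        · subst hf; exact pC_mono A _
      · apply resolve_master hA (by omega) hk.symm hs ht himg hP hQ hBuniv hsA htA
        · -- c1
          intro b hb v hbv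
          rcases hmultimem b hb with ⟨C, hC, hbC⟩ | hbSE
          · exact ⟨hiC C, hMHL _ (hMHmem C hC), hiC_lt (hmultichain C hC) hbC hbv⟩
          · have hbb0 : b = b0 := by
              have := hb0 ▸ hbSE
              exact mem_singleton.mp this
            subst hbb0
            exact ⟨loneC t b, hloneL, loneC_b ht hb0t hbv⟩
        · -- c2
          intro b hb u hub hAu
          rcases hmultimem b hb with ⟨C, hC, hbC⟩ | hbSE
          · exact ⟨loC C, hMLL _ (hMLmem C hC), loC_lt (hmultichain C hC) hbC hub⟩
          · have hbb0 : b = b0 := mem_singleton.mp (hb0 ▸ hbSE)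
            subst hbb0
            rcases hAu with huA | hut
            · refine ⟨pC A rk, hP, ?_⟩
              rw [pC_self hA rk huA]
              have hu1 := rk_mem_Icc himg huA
              apply pC_lt_of_ranks (by omega)
              intro d hd hdb
              exact hdown d hd hdb u huA hub
            · subst hut
              exact ⟨loneC u b, hloneL, loneC_t ht hub⟩
    · -- no singleton chains
      have hse0 : SE.card = 0 := by omega
      obtain ⟨rk, himg⟩ := exists_rank A
      set L : List (V → ℤ) := MH ++ ML ++ [pC A rk, pC A (fun x => k + 1 - rk x)] with hL
      have hP : pC A rk ∈ L := by rw [hL]; simp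
      have hQ : pC A (fun x => k + 1 - rk x) ∈ L := by rw [hL]; simp
      have hMHL : ∀ f ∈ MH, f ∈ L := by intro f hf; rw [hL]; simp [hf]
      have hMLL : ∀ f ∈ ML, f ∈ L := by intro f hf; rw [hL]; simp [hf]
      refine ⟨L, ?_, ?_, ?_⟩
      · rw [hL]
        simp only [List.length_append, List.length_cons, List.length_nil, hMHlen, hMLlen]
        omega
      · intro f hf
        rw [hL] at hf
        simp only [List.mem_append, List.mem_cons, List.mem_singleton, List.not_mem_nil,
          or_false] at hf
        rcases hf with (hf | hf) | hf | hf
        · exact hMHmono f hf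
        · exact hMLmono f hf
        · subst hf; exact pC_mono A rk
        · subst hf; exact pC_mono A _
      · apply resolve_master hA (by omega) hk.symm hs ht himg hP hQ hBuniv hsA htA
        · intro b hb v hbv
          rcases hmultimem b hb with ⟨C, hC, hbC⟩ | hbSE
          · exact ⟨hiC C, hMHL _ (hMHmem C hC), hiC_lt (hmultichain C hC) hbC hbv⟩
          · exact absurd (card_eq_zero.mp hse0 ▸ hbSE) (notMem_empty b)
        · intro b hb u hub _
          rcases hmultimem b hb with ⟨C, hC, hbC⟩ | hbSE
          · exact ⟨loC C, hMLL _ (hMLmem C hC), loC_lt (hmultichain C hC) hbC hub⟩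
          · exact absurd (card_eq_zero.mp hse0 ▸ hbSE) (notMem_empty b)


lemma assemble {L : List (V → ℤ)}
    (hm : ∀ f ∈ L, Monotone f) (hr : ∀ u v : V, ¬ u ≤ v → ∃ f ∈ L, f v < f u) :
    ∃ D : V → Fin L.length → ℤ, Function.Injective D ∧
      ∀ u v : V, u ≤ v ↔ ∀ i, D u i ≤ D v i := by
  have hiff : ∀ u v : V, u ≤ v ↔ ∀ i : Fin L.length, L.get i u ≤ L.get i v := by
    intro u v
    constructor
    · intro h i
      exact hm (L.get i) (L.get_mem i) h
    · intro h
      by_contra huv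
      obtain ⟨f, hf, hlt⟩ := hr u v huv
      obtain ⟨i, hi⟩ := List.mem_iff_get.mp hf
      have := h i
      rw [hi] at this
      omega
  refine ⟨fun v i => L.get i v, ?_, hiff⟩
  intro u v h
  have h1 : u ≤ v := (hiff u v).mpr (fun i => le_of_eq (congrFun h i))
  have h2 : v ≤ u := (hiff v u).mpr (fun i => le_of_eq (congrFun h i).symm)
  exact le_antisymm h1 h2

theorem main_abs {V : Type*} [Fintype V] [PartialOrder V] (s t : V)
    (hs : ∀ v, s ≤ v) (ht : ∀ v, v ≤ t) (w : ℕ)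
    (hw : ∀ A : Finset V, (∀ u ∈ A, ∀ v ∈ A, u ≠ v → ¬ u ≤ v ∧ ¬ v ≤ u) → A.card ≤ w) :
    ∃ d : ℕ, d ≤ min (Fintype.card V / 2) w ∧
      ∃ D : V → Fin d → ℤ, Function.Injective D ∧
        ∀ u v : V, u ≤ v ↔ ∀ i, D u i ≤ D v i := by
  classical
  have hw' : ∀ A : Finset V, ACF A → A.card ≤ w := by
    intro A hA
    apply hw
    intro u hu v hv hne
    exact ⟨hA u hu v hv hne, hA v hv u hu (Ne.symm hne)⟩
  by_cases hn1 : Fintype.card V ≤ 1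
  · have hsub : Subsingleton V := Fintype.card_le_one_iff_subsingleton.mp hn1
    refine ⟨0, Nat.zero_le _, fun _ => Fin.elim0, ?_, ?_⟩
    · intro a b _
      exact Subsingleton.elim a b
    · intro u v
      constructor
      · intro _ i
        exact i.elim0
      · intro _
        exact le_of_eq (Subsingleton.elim u v)
  push_neg at hn1
  obtain ⟨Amax, hAsub, hAac, hAcard⟩ := exists_width_antichain (univ : Finset V)
  have hwidth_w : widthF (univ : Finset V) ≤ w := hAcard ▸ hw' Amax hAac
  by_cases hcase : widthF (univ : Finset V) ≤ Fintype.card V / 2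
  · obtain ⟨𝒞, hch, hcov, hdisj, hcard⟩ := dilworth (univ : Finset V)
    set L : List (V → ℤ) := 𝒞.toList.map hiC with hL
    have hmo : ∀ f ∈ L, Monotone f := by
      intro f hf
      obtain ⟨C, _, rfl⟩ := List.mem_map.mp hf
      exact hiC_mono C
    have hr : ∀ u v : V, ¬ u ≤ v → ∃ f ∈ L, f v < f u := by
      intro u v huv
      obtain ⟨C, hC, huC⟩ := hcov u (mem_univ u)
      exact ⟨hiC C, List.mem_map.mpr ⟨C, Finset.mem_toList.mpr hC, rfl⟩,
        hiC_lt (hch C hC).2.1 huC huv⟩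
    obtain ⟨D, hinj, hiff⟩ := assemble hmo hr
    refine ⟨L.length, ?_, D, hinj, hiff⟩
    have hlen : L.length = 𝒞.card := by rw [hL, List.length_map, Finset.length_toList]
    apply le_min <;> omega
  · push_neg at hcase
    have hk2 : 2 ≤ Amax.card := by
      have h2 : 1 ≤ Fintype.card V / 2 := by omega
      omega
    obtain ⟨L, hlen, hmo, hr⟩ := hard_case s t hs ht Amax hAac hk2
    obtain ⟨D, hinj, hiff⟩ := assemble hmo hr
    refine ⟨L.length, ?_, D, hinj, hiff⟩
    apply le_min <;> omega


end DDim

/-- The dominance drawing dimension of a finite st-DAG with n vertices is at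
most min(⌊n/2⌋, w), where w bounds the size of every set of pairwise
incomparable vertices (the width). -/
theorem stmt_13 {V : Type*} [Fintype V] (E : V → V → Prop)
    (hacyc : ∀ u v : V, reaches E u v → reaches E v u → u = v)
    (s t : V) (hs : ∀ v, reaches E s v) (ht : ∀ v, reaches E v t)
    (w : ℕ)
    (hw : ∀ A : Finset V,
        (∀ u ∈ A, ∀ v ∈ A, u ≠ v → ¬ reaches E u v ∧ ¬ reaches E v u) →
        A.card ≤ w) :
    ∃ d : ℕ, d ≤ min (Fintype.card V / 2) w ∧
      ∃ D : V → Fin d → ℤ, Function.Injective D ∧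
        ∀ u v : V, reaches E u v ↔ ∀ i, D u i ≤ D v i := by
  letI : PartialOrder V :=
    { le := reaches E
      le_refl := fun _ => Relation.ReflTransGen.refl
      le_trans := fun _ _ _ h1 h2 => Relation.ReflTransGen.trans h1 h2
      le_antisymm := hacyc }
  exact DDim.main_abs s t hs ht w hw
end

section
/- Given a finite set V with an injective map D : V → ℤ^k such that u reaches v iff D(u) ≤ D(v) componentwise (a k-dimensional dominance drawing of a DAG G), there exists a map D' : V → ℤ^k which is still a dominance drawing of G and additionally each coordinate function D'_i is injective on V. -/
lemma key_arith (n a b s t : ℤ) (hs : 0 ≤ s) (hsn : s < n) (ht : 0 ≤ t) (htn : t < n)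
    (h : n * a + s ≤ n * b + t) : a ≤ b := by
  by_contra hab
  push_neg at hab
  have h1 : n * (b + 1) ≤ n * a := by
    apply mul_le_mul_of_nonneg_left (by omega) (by omega)
  nlinarith

/-- Every k-dimensional dominance drawing of a finite DAG can be converted to a
k-dimensional dominance drawing with distinct coordinates: each coordinate
function is injective. -/
theorem stmt_18 {V : Type*} [Fintype V] (E : V → V → Prop) (k : ℕ)
    (D : V → Fin k → ℤ) (hinj : Function.Injective D)
    (hdom : ∀ u v : V, reaches E u v ↔ ∀ i, D u i ≤ D v i) :
    ∃ D' : V → Fin k → ℤ, Function.Injective D' ∧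
      (∀ u v : V, reaches E u v ↔ ∀ i, D' u i ≤ D' v i) ∧
      ∀ i, Function.Injective (fun v => D' v i) := by
  letI : PartialOrder V := PartialOrder.lift D hinj
  letI : Fintype (LinearExtension V) := ‹Fintype V›
  let n : ℕ := Fintype.card V
  have hcard : Fintype.card (LinearExtension V) = n := rfl
  let e : LinearExtension V ≃o Fin n := (monoEquivOfFin (LinearExtension V) hcard).symm
  let f : V → ℤ := fun v => ((e (toLinearExtension v)) : ℕ)
  have hf0 : ∀ v, 0 ≤ f v := fun v => Int.ofNat_nonneg _
  have hfn : ∀ v : V, f v < n := fun v => by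
    show ((e (toLinearExtension v) : ℕ) : ℤ) < n
    exact_mod_cast (e (toLinearExtension v)).isLt
  have hfmono : ∀ u v : V, u ≤ v → f u ≤ f v := fun u v h => by
    have := e.monotone (toLinearExtension.monotone h)
    show ((e (toLinearExtension u) : ℕ) : ℤ) ≤ ((e (toLinearExtension v) : ℕ) : ℤ)
    exact_mod_cast this
  have hfinj : Function.Injective f := by
    intro u v h
    have h1 : e (toLinearExtension u) = e (toLinearExtension v) := by
      apply Fin.ext
      have h' : ((e (toLinearExtension u) : ℕ) : ℤ) = ((e (toLinearExtension v) : ℕ) : ℤ) := h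
      exact_mod_cast h'
    have h2 := e.injective h1
    exact h2
  refine ⟨fun v i => (n : ℤ) * D v i + f v, ?_, ?_, ?_⟩
  · intro u v h
    apply hinj
    funext i
    have h1 : (n : ℤ) * D u i + f u = (n : ℤ) * D v i + f v := congrFun h i
    have := key_arith n (D u i) (D v i) (f u) (f v) (hf0 u) (hfn u) (hf0 v) (hfn v) h1.le
    have := key_arith n (D v i) (D u i) (f v) (f u) (hf0 v) (hfn v) (hf0 u) (hfn u) h1.ge
    omega
  · intro u v
    rw [hdom]
    constructor
    · intro h i
      have hle : u ≤ v := h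
      have := hfmono u v hle
      have := h i
      show (n : ℤ) * D u i + f u ≤ (n : ℤ) * D v i + f v
      nlinarith [hf0 u, hf0 v]
    · intro h i
      exact key_arith n (D u i) (D v i) (f u) (f v) (hf0 u) (hfn u) (hf0 v) (hfn v) (h i)
  · intro i u v h
    simp only at h
    apply hfinj
    have h1 := key_arith n (D u i) (D v i) (f u) (f v) (hf0 u) (hfn u) (hf0 v) (hfn v) h.le
    have h2 := key_arith n (D v i) (D u i) (f v) (f u) (hf0 v) (hfn v) (hf0 u) (hfn u) h.ge
    have heq : D u i = D v i := le_antisymm h1 h2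
    rw [heq] at h
    linarith
end
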